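/- arXiv:1405.5121 — 4 statements merged into one kernel-verified Lean document; each statement's English description precedes it below -/
import Mathlib

section
/- (Rota's convergence theorem, alternating form) Let P be a μ-preserving Markov operator on L²(μ) of a standard Borel probability space, arising from the kernel situation above, with adjoint P*. Then for the one-sided path system, (P̃*)ⁿ P̃ⁿ f converges in L²(μ̃⁻) to the conditional expectation E(f | Φ_{-∞}) onto the backwards tail σ-algebra Φ_{-∞} := ⋂_n Φ_{≤ -n}, for every f ∈ L²(μ̃⁻). -/
set_option maxHeartbeats 1000000
set_option synthInstance.maxHeartbeats 400000

open MeasureTheory ProbabilityTheory Filter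

/-- The Markov operator `P̃` on functions of backward paths (paths realized as `ℕ → X` via
`n ↦ x_{-n}`): it appends a new coordinate at time `0` sampled from `P(x_0, ·)` and averages. -/
noncomputable def appendOp {X : Type*} [MeasurableSpace X] (P : ProbabilityTheory.Kernel X X)
    (g : (ℕ → X) → ℝ) : (ℕ → X) → ℝ :=
  fun y => ∫ z, g (fun n => if n = 0 then z else y (n - 1)) ∂(P (y 0))


namespace RotaAux

variable {X : Type*} [MeasurableSpace X]

/-- The append map on path space. -/
def app (p : (ℕ → X) × X) : ℕ → X := fun n => if n = 0 then p.2 else p.1 (n - 1)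

/-- The shift maps. -/
def T (n : ℕ) : (ℕ → X) → ℕ → X := fun y k => y (k + n)

lemma measurable_app : Measurable (app (X := X)) := by
  apply measurable_pi_lambda
  intro n
  rcases n with _ | m
  · simpa [app] using measurable_snd
  · simp only [app, Nat.add_one_ne_zero, if_false, Nat.add_sub_cancel]
    exact (measurable_pi_apply m).comp measurable_fst

lemma measurable_T (n : ℕ) : Measurable (T (X := X) n) :=
  measurable_pi_lambda _ fun k => measurable_pi_apply _

variable (P : Kernel X X) [IsMarkovKernel P]

/-- The kernel `y ↦ P (y 0)` on path space. -/
noncomputable def κP : Kernel (ℕ → X) X := P.comap (fun y => y 0) (measurable_pi_apply 0)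

instance : IsMarkovKernel (κP P) := by
  constructor
  intro a
  rw [κP, Kernel.comap_apply]
  infer_instance

lemma appendOp_eq (g : (ℕ → X) → ℝ) :
    appendOp P g = fun y => ∫ z, g (app (y, z)) ∂((κP P) y) := by
  funext y
  rw [κP, Kernel.comap_apply]
  rfl

lemma measurable_appendOp {g : (ℕ → X) → ℝ} (hg : Measurable g) :
    Measurable (appendOp P g) := by
  rw [appendOp_eq]
  exact ((hg.comp measurable_app).stronglyMeasurable.integral_kernel_prod_right').measurable

lemma measurable_iterate {f : (ℕ → X) → ℝ} (hf : Measurable f) (n : ℕ) :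
    Measurable ((appendOp P)^[n] f) := by
  induction n with
  | zero => exact hf
  | succ k ih => rw [Function.iterate_succ_apply']; exact measurable_appendOp P ih

variable (μm : Measure (ℕ → X)) [IsProbabilityMeasure μm]
variable (hMarkov : μm.bind (fun y =>
    (P (y 0)).map (fun z => fun n => if n = 0 then z else y (n - 1))) = μm)

lemma bind_meas : Measurable (fun y : ℕ → X =>
    (P (y 0)).map (fun z => fun n => if n = 0 then z else y (n - 1))) := by
  apply Measure.measurable_of_measurable_coe
  intro s hs
  have heq : (fun y : ℕ → X => (P (y 0)).map (fun z => fun n => if n = 0 then z else y (n - 1)) s)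
      = fun y => (κP P) y (Prod.mk y ⁻¹' (app ⁻¹' s)) := by
    funext y
    have hmeas_e : Measurable (fun z : X => (fun n : ℕ => if n = 0 then z else y (n - 1))) :=
      measurable_app.comp measurable_prodMk_left
    rw [Measure.map_apply hmeas_e hs, κP, Kernel.comap_apply]
    rfl
  rw [heq]
  exact Kernel.measurable_kernel_prodMk_left (measurable_app hs)

include hMarkov

lemma map_app_compProd : (μm ⊗ₘ κP P).map app = μm := by
  conv_rhs => rw [← hMarkov]
  ext s hs
  rw [Measure.map_apply measurable_app hs, Measure.compProd_apply (measurable_app hs),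
    Measure.bind_apply hs (bind_meas P).aemeasurable]
  refine lintegral_congr fun y => ?_
  have hmeas_e : Measurable (fun z : X => (fun n : ℕ => if n = 0 then z else y (n - 1))) :=
    measurable_app.comp measurable_prodMk_left
  rw [Measure.map_apply hmeas_e hs, κP, Kernel.comap_apply]
  rfl

lemma integrable_comp_app {f : (ℕ → X) → ℝ} (hf : Measurable f) (hfi : Integrable f μm) :
    Integrable (fun p => f (app p)) (μm ⊗ₘ κP P) := by
  refine (integrable_map_measure ?_ measurable_app.aemeasurable).1 ?_
  · rw [map_app_compProd P μm hMarkov]; exact hf.aestronglyMeasurable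
  · rw [map_app_compProd P μm hMarkov]; exact hfi

lemma integral_appendOp {f : (ℕ → X) → ℝ} (hf : Measurable f) (hfi : Integrable f μm) :
    ∫ y, f y ∂μm = ∫ y, appendOp P f y ∂μm := by
  conv_lhs => rw [← map_app_compProd P μm hMarkov]
  rw [integral_map measurable_app.aemeasurable
    (by rw [map_app_compProd P μm hMarkov]; exact hf.aestronglyMeasurable),
    Measure.integral_compProd (integrable_comp_app P μm hMarkov hf hfi)]
  rw [appendOp_eq]

lemma integrable_appendOp {f : (ℕ → X) → ℝ} (hf : Measurable f) (hfi : Integrable f μm) :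
    Integrable (appendOp P f) μm := by
  have h1 := (Measure.integrable_compProd_iff
    (hf.comp measurable_app).aestronglyMeasurable).1 (integrable_comp_app P μm hMarkov hf hfi)
  refine Integrable.mono h1.2 (measurable_appendOp P hf).aestronglyMeasurable ?_
  refine Eventually.of_forall fun y => ?_
  rw [appendOp_eq]
  exact (norm_integral_le_integral_norm _).trans (le_abs_self _)

lemma map_T1 : μm.map (T 1) = μm := by
  have hcomp : (T (X := X) 1) ∘ app = Prod.fst := by
    funext p k
    simp [T, app]
  conv_lhs => rw [← map_app_compProd P μm hMarkov]
  rw [Measure.map_map (measurable_T 1) measurable_app, hcomp]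
  exact Measure.fst_compProd μm (κP P)

lemma map_T (n : ℕ) : μm.map (T n) = μm := by
  induction n with
  | zero =>
    have : (T (X := X) 0) = id := rfl
    rw [this, Measure.map_id]
  | succ n ih =>
    have : (T (X := X) (n + 1)) = (T n) ∘ (T 1) := rfl
    rw [this, ← Measure.map_map (measurable_T n) (measurable_T 1), map_T1 P μm hMarkov, ih]

lemma key_setIntegral (n : ℕ) :
    ∀ (f : (ℕ → X) → ℝ), Measurable f → Integrable f μm →
    ∀ B : Set (ℕ → X), MeasurableSet B →
    ∫ y in (T n) ⁻¹' B, f y ∂μm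
      = ∫ y in (T n) ⁻¹' B, ((appendOp P)^[n] f) (T n y) ∂μm := by
  induction n with
  | zero =>
    intro f hf hfi B hB
    rfl
  | succ n ih =>
    intro f hf hfi B hB
    have hC : MeasurableSet ((T (X := X) n) ⁻¹' B) := measurable_T n hB
    have hpre : (T (X := X) (n + 1)) ⁻¹' B = (T 1) ⁻¹' ((T n) ⁻¹' B) := rfl
    have hT1app : ∀ (w : ℕ → X) (z : X), T 1 (app (w, z)) = w := by
      intro w z
      funext k
      simp [T, app]
    -- step 1 : one-step Markov identity via indicators
    have hstep : ∫ y in (T 1) ⁻¹' ((T n) ⁻¹' B), f y ∂μm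
        = ∫ y in (T n) ⁻¹' B, appendOp P f y ∂μm := by
      rw [← integral_indicator ((measurable_T 1) hC), ← integral_indicator hC]
      rw [integral_appendOp P μm hMarkov (hf.indicator ((measurable_T 1) hC))
        (hfi.indicator ((measurable_T 1) hC))]
      congr 1
      funext w
      by_cases hw : w ∈ (T (X := X) n) ⁻¹' B
      · rw [Set.indicator_of_mem hw, appendOp_eq]
        have hz : (fun z => (((T 1) ⁻¹' ((T n) ⁻¹' B)).indicator f) (app (w, z)))
            = fun z => f (app (w, z)) := by
          funext z
          exact Set.indicator_of_mem (by rw [Set.mem_preimage, hT1app]; exact hw) f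
        show ∫ z, (((T 1) ⁻¹' ((T n) ⁻¹' B)).indicator f) (app (w, z)) ∂((κP P) w)
          = appendOp P f w
        rw [hz, appendOp_eq]
      · rw [Set.indicator_of_notMem hw, appendOp_eq]
        have hz : (fun z => (((T 1) ⁻¹' ((T n) ⁻¹' B)).indicator f) (app (w, z)))
            = fun _ => (0 : ℝ) := by
          funext z
          exact Set.indicator_of_notMem (by rw [Set.mem_preimage, hT1app]; exact hw) f
        show ∫ z, (((T 1) ⁻¹' ((T n) ⁻¹' B)).indicator f) (app (w, z)) ∂((κP P) w) = 0
        rw [hz, integral_zero]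
    -- step 2 : induction hypothesis applied to `appendOp P f`
    have h2 := ih (appendOp P f) (measurable_appendOp P hf)
      (integrable_appendOp P μm hMarkov hf hfi) B hB
    -- step 3 : transfer along the measure-preserving shift
    set g : (ℕ → X) → ℝ := (appendOp P)^[n] (appendOp P f) with hgdef
    have hgm : Measurable g := measurable_iterate P (measurable_appendOp P hf) n
    have h3 : ∫ y in (T n) ⁻¹' B, g (T n y) ∂μm
        = ∫ y in (T (n + 1)) ⁻¹' B, g (T (n + 1) y) ∂μm := by
      have hm1 : AEStronglyMeasurable g (μm.map (T n)) := by
        rw [map_T P μm hMarkov n]; exact hgm.aestronglyMeasurable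
      have hm2 : AEStronglyMeasurable g (μm.map (T (n + 1))) := by
        rw [map_T P μm hMarkov (n + 1)]; exact hgm.aestronglyMeasurable
      calc ∫ y in (T n) ⁻¹' B, g (T n y) ∂μm
          = ∫ y in B, g y ∂(μm.map (T n)) := (setIntegral_map hB hm1 (measurable_T n).aemeasurable).symm
        _ = ∫ y in B, g y ∂μm := by rw [map_T P μm hMarkov n]
        _ = ∫ y in B, g y ∂(μm.map (T (n + 1))) := by rw [map_T P μm hMarkov (n + 1)]
        _ = ∫ y in (T (n + 1)) ⁻¹' B, g (T (n + 1) y) ∂μm :=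
            setIntegral_map hB hm2 (measurable_T (n + 1)).aemeasurable
    rw [hpre, hstep, h2]
    have : (appendOp P)^[n + 1] f = g := by rw [Function.iterate_succ_apply]
    rw [this, ← hpre, h3]

lemma integrable_iterate {f : (ℕ → X) → ℝ} (hf : Measurable f) (hfi : Integrable f μm) (n : ℕ) :
    Integrable ((appendOp P)^[n] f) μm := by
  induction n with
  | zero => exact hfi
  | succ k ih =>
    rw [Function.iterate_succ_apply']
    exact integrable_appendOp P μm hMarkov (measurable_iterate P hf k) ih

/-- The alternating operator is a version of the conditional expectation on `Φ_{≤ -n}`. -/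
theorem appendOp_iterate_condexp {f : (ℕ → X) → ℝ} (hf : Measurable f)
    (hfi : Integrable f μm) (n : ℕ) :
    (fun y => ((appendOp P)^[n] f) (fun k : ℕ => y (k + n))) =ᵐ[μm]
      μm[f | MeasurableSpace.comap (fun y : ℕ → X => fun k : ℕ => y (k + n)) inferInstance] := by
  have hm : MeasurableSpace.comap (T (X := X) n) inferInstance ≤ _ := (measurable_T n).comap_le
  haveI : SigmaFinite (μm.trim hm) := by
    have : IsFiniteMeasure (μm.trim hm) :=
      ⟨by rw [trim_measurableSet_eq hm MeasurableSet.univ]; exact measure_lt_top μm _⟩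
    infer_instance
  refine ae_eq_condExp_of_forall_setIntegral_eq hm hfi ?_ ?_ ?_
  · intro s _ _
    have : Integrable (fun y => ((appendOp P)^[n] f) (T n y)) μm := by
      refine (integrable_map_measure ?_ (measurable_T n).aemeasurable).1 ?_
      · rw [map_T P μm hMarkov n]
        exact (measurable_iterate P hf n).aestronglyMeasurable
      · rw [map_T P μm hMarkov n]
        exact integrable_iterate P μm hMarkov hf hfi n
    exact this.integrableOn
  · rintro s ⟨B, hB, rfl⟩ _
    exact (key_setIntegral P μm hMarkov n f hf hfi B hB).symm
  · have hTm : Measurable[MeasurableSpace.comap (T (X := X) n) inferInstance] (T (X := X) n) :=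
      measurable_iff_comap_le.mpr le_rfl
    exact (((measurable_iterate P hf n).comp hTm).stronglyMeasurable).aestronglyMeasurable

end RotaAux


section PartA

variable {Ω : Type*} {m0 : MeasurableSpace Ω} {μ : Measure Ω}

/-- A function a.e. strongly measurable w.r.t. each element of an antitone sequence of
sub-σ-algebras is a.e. strongly measurable w.r.t. their infimum. -/
lemma aesm'_iInf (𝔪 : ℕ → MeasurableSpace Ω) (hanti : Antitone 𝔪)
    {h : Ω → ℝ} (hm : ∀ n, AEStronglyMeasurable[𝔪 n] h μ) :
    AEStronglyMeasurable[⨅ n, 𝔪 n] h μ := by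
  set g : ℕ → Ω → ℝ := fun n => (hm n).mk h with hg
  have hgm : ∀ n, StronglyMeasurable[𝔪 n] (g n) := fun n => (hm n).stronglyMeasurable_mk
  have hae : ∀ n, h =ᵐ[μ] g n := fun n => (hm n).ae_eq_mk
  refine ⟨fun x => limsup (fun n => g n x) atTop, ?_, ?_⟩
  · apply Measurable.stronglyMeasurable
    have key : ∀ N, Measurable[𝔪 N] fun x => limsup (fun n => g n x) atTop := by
      intro N
      have : (fun x => limsup (fun n => g n x) atTop)
          = fun x => limsup (fun n => g (n + N) x) atTop := by
        ext x; exact (Filter.limsup_nat_add (fun n => g n x) N).symm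
      rw [this]
      exact Measurable.limsup fun n =>
        ((hgm (n + N)).measurable).mono (hanti (Nat.le_add_left N n)) le_rfl
    intro s hs
    exact MeasurableSpace.measurableSet_iInf.2 fun N => key N hs
  · filter_upwards [ae_all_iff.2 hae] with x hx
    have : (fun n => g n x) = fun _ => h x := by ext n; exact (hx n).symm
    rw [this, Filter.limsup_const]

variable [IsProbabilityMeasure μ]

/-- For an `L²` function, the conditional expectation agrees a.e. with `condExpL2`. -/
lemma condexp_ae_eq_condExpL2 {m : MeasurableSpace Ω} (hm : m ≤ m0) {f : Ω → ℝ}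
    (hf2 : MemLp f 2 μ) :
    μ[f|m] =ᵐ[μ] (condExpL2 ℝ ℝ hm (hf2.toLp f) : Ω → ℝ) := by
  haveI : SigmaFinite (μ.trim hm) := by
    have : IsFiniteMeasure (μ.trim hm) :=
      ⟨by rw [trim_measurableSet_eq hm MeasurableSet.univ]; exact measure_lt_top μ _⟩
    infer_instance
  refine (ae_eq_condExp_of_forall_setIntegral_eq hm
    (hf2.integrable one_le_two) ?_ ?_ ?_).symm
  · intro s _ _
    exact integrableOn_condExpL2_of_measure_ne_top hm (measure_ne_top μ s) _
  · intro s hs hμs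
    rw [integral_condExpL2_eq hm (hf2.toLp f) hs (measure_ne_top μ s)]
    exact integral_congr_ae (ae_restrict_of_ae hf2.coeFn_toLp)
  · exact aestronglyMeasurable_condExpL2 hm _

/-- Downward (reverse) martingale convergence in `L²`: conditional expectations with respect to
an antitone sequence of σ-algebras converge in `L²` to the conditional expectation with respect
to the infimum σ-algebra. -/
theorem tendsto_eLpNorm_condexp_iInf (𝔪 : ℕ → MeasurableSpace Ω)
    (hle : ∀ n, 𝔪 n ≤ m0) (hanti : Antitone 𝔪) {f : Ω → ℝ} (hf2 : MemLp f 2 μ) :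
    Tendsto (fun n => eLpNorm (fun x => (μ[f|𝔪 n]) x - (μ[f|⨅ n, 𝔪 n]) x) 2 μ)
      atTop (nhds 0) := by
  have hinf : (⨅ n, 𝔪 n) ≤ m0 := le_trans (iInf_le 𝔪 0) (hle 0)
  set F : Lp ℝ 2 μ := hf2.toLp f with hF
  set Q : ℕ → Lp ℝ 2 μ := fun n => (condExpL2 ℝ ℝ (hle n) F : Lp ℝ 2 μ) with hQ
  set Qinf : Lp ℝ 2 μ := (condExpL2 ℝ ℝ hinf F : Lp ℝ 2 μ) with hQinf
  -- orthogonality of `F - condExpL2 m F` against m-measurable L² functions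
  have horth : ∀ {m : MeasurableSpace Ω} (hm : m ≤ m0) (G : Lp ℝ 2 μ),
      AEStronglyMeasurable[m] G μ →
      (inner ℝ (F - (condExpL2 ℝ ℝ hm F : Lp ℝ 2 μ)) G : ℝ) = 0 := by
    intro m hm G hG
    haveI : Fact (m ≤ m0) := ⟨hm⟩
    exact Submodule.starProjection_inner_eq_zero F G (mem_lpMeas_iff_aestronglyMeasurable.mpr hG)
  have hQmeas : ∀ n, AEStronglyMeasurable[𝔪 n] (Q n) μ := fun n =>
    aestronglyMeasurable_condExpL2 (hle n) F
  have hQinfmeas : AEStronglyMeasurable[⨅ n, 𝔪 n] Qinf μ :=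
    aestronglyMeasurable_condExpL2 hinf F
  -- Pythagoras
  have key : ∀ {n m : ℕ}, n ≤ m → ‖Q n - Q m‖ ^ 2 = ‖Q n‖ ^ 2 - ‖Q m‖ ^ 2 := by
    intro n m hnm
    have h1 : (inner ℝ (F - Q m) (Q m) : ℝ) = 0 := horth (hle m) (Q m) (hQmeas m)
    have h2 : (inner ℝ (F - Q n) (Q m) : ℝ) = 0 :=
      horth (hle n) (Q m) ((hQmeas m).mono (hanti hnm))
    have h3 : (inner ℝ (Q n - Q m) (Q m) : ℝ) = 0 := by
      have : Q n - Q m = (F - Q m) - (F - Q n) := by abel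
      rw [this, inner_sub_left, h1, h2, sub_zero]
    have h4 := norm_add_sq_real (Q n - Q m) (Q m)
    have h5 : Q n - Q m + Q m = Q n := by abel
    rw [h5, h3] at h4
    linarith
  -- the norms-squared sequence is antitone and bounded below, hence convergent
  have hanti_c : Antitone fun n => ‖Q n‖ ^ 2 := by
    intro n m hnm
    have := key hnm
    dsimp only
    nlinarith [sq_nonneg ‖Q n - Q m‖]
  have hc_tendsto : ∃ l, Tendsto (fun n => ‖Q n‖ ^ 2) atTop (nhds l) :=
    ⟨_, tendsto_atTop_ciInf hanti_c ⟨0, fun x ⟨n, hn⟩ => hn ▸ sq_nonneg _⟩⟩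
  obtain ⟨l, hl⟩ := hc_tendsto
  have hc_cauchy : CauchySeq fun n => ‖Q n‖ ^ 2 := hl.cauchySeq
  -- Q is Cauchy
  have hQcauchy : CauchySeq Q := by
    rw [Metric.cauchySeq_iff]
    intro ε hε
    obtain ⟨N, hN⟩ := Metric.cauchySeq_iff.1 hc_cauchy (ε ^ 2) (by positivity)
    refine ⟨N, fun m hm n hn => ?_⟩
    rcases le_total n m with h | h
    · have hk := key h
      have hd := hN m hm n hn
      rw [Real.dist_eq] at hd
      have : ‖Q n - Q m‖ ^ 2 < ε ^ 2 := by
        rw [hk]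
        calc ‖Q n‖ ^ 2 - ‖Q m‖ ^ 2 ≤ |‖Q m‖ ^ 2 - ‖Q n‖ ^ 2| := by
              rw [abs_sub_comm]; exact le_abs_self _
          _ < ε ^ 2 := hd
      have := lt_of_pow_lt_pow_left₀ 2 hε.le this
      rw [dist_eq_norm, norm_sub_rev]; exact this
    · have hk := key h
      have hd := hN n hn m hm
      rw [Real.dist_eq] at hd
      have : ‖Q m - Q n‖ ^ 2 < ε ^ 2 := by
        rw [hk]
        calc ‖Q m‖ ^ 2 - ‖Q n‖ ^ 2 ≤ |‖Q m‖ ^ 2 - ‖Q n‖ ^ 2| := le_abs_self _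
          _ < ε ^ 2 := by rwa [abs_sub_comm] at hd
      have := lt_of_pow_lt_pow_left₀ 2 hε.le this
      rw [dist_eq_norm]; exact this
  obtain ⟨L, hL⟩ := cauchySeq_tendsto_of_complete hQcauchy
  -- L is a.e. measurable w.r.t. each 𝔪 n
  have hLmem : ∀ n, AEStronglyMeasurable[𝔪 n] L μ := by
    intro n
    haveI : Fact (𝔪 n ≤ m0) := ⟨hle n⟩
    have hcs : CompleteSpace (lpMeas ℝ ℝ (𝔪 n) 2 μ) := inferInstance
    have hclosed : IsClosed (lpMeas ℝ ℝ (𝔪 n) 2 μ : Set (Lp ℝ 2 μ)) :=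
      (completeSpace_coe_iff_isComplete.mp hcs).isClosed
    have hmemL : L ∈ lpMeas ℝ ℝ (𝔪 n) 2 μ := by
      refine hclosed.mem_of_tendsto hL (eventually_atTop.2 ⟨n, fun m hm => ?_⟩)
      exact mem_lpMeas_iff_aestronglyMeasurable.mpr ((hQmeas m).mono (hanti hm))
    exact mem_lpMeas_iff_aestronglyMeasurable.mp hmemL
  have hLinf : AEStronglyMeasurable[⨅ n, 𝔪 n] (L : Ω → ℝ) μ := aesm'_iInf 𝔪 hanti hLmem
  -- identify the limit with Qinf
  have hLQinf : L = Qinf := by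
    have hsub : AEStronglyMeasurable[⨅ n, 𝔪 n] ((L - Qinf : Lp ℝ 2 μ) : Ω → ℝ) μ :=
      (hLinf.sub hQinfmeas).congr (Lp.coeFn_sub L Qinf).symm
    have ha : (inner ℝ (F - Qinf) (L - Qinf) : ℝ) = 0 := horth hinf _ hsub
    have hb : (inner ℝ (F - L) (L - Qinf) : ℝ) = 0 := by
      have hzero : ∀ n, (inner ℝ (F - Q n) (L - Qinf) : ℝ) = 0 := by
        intro n
        refine horth (hle n) _ ?_
        have : AEStronglyMeasurable[𝔪 n] ((L - Qinf : Lp ℝ 2 μ) : Ω → ℝ) μ :=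
          ((hLmem n).sub (hQinfmeas.mono (iInf_le 𝔪 n))).congr (Lp.coeFn_sub L Qinf).symm
        exact this
      have htt : Tendsto (fun n => (inner ℝ (F - Q n) (L - Qinf) : ℝ)) atTop
          (nhds (inner ℝ (F - L) (L - Qinf) : ℝ)) :=
        Tendsto.inner (tendsto_const_nhds.sub hL) tendsto_const_nhds
      have h0 : Tendsto (fun _ : ℕ => (0 : ℝ)) atTop (nhds 0) := tendsto_const_nhds
      have := tendsto_nhds_unique htt (by simpa only [hzero] using h0)
      exact this
    have : ‖L - Qinf‖ ^ 2 = 0 := by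
      have hsplit : (inner ℝ (L - Qinf) (L - Qinf) : ℝ)
          = (inner ℝ (F - Qinf) (L - Qinf) : ℝ) - (inner ℝ (F - L) (L - Qinf) : ℝ) := by
        rw [← inner_sub_left]; congr 1; abel
      rw [← real_inner_self_eq_norm_sq, hsplit, ha, hb, sub_zero]
    have := pow_eq_zero_iff (n := 2) (by norm_num) |>.mp this
    exact sub_eq_zero.mp (norm_eq_zero.mp this)
  rw [hLQinf] at hL
  -- conclude
  have hnorm0 : Tendsto (fun n => ‖Q n - Qinf‖) atTop (nhds 0) := by
    exact tendsto_iff_norm_sub_tendsto_zero.mp hL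
  have heq : ∀ n, eLpNorm (fun x => (μ[f|𝔪 n]) x - (μ[f|⨅ n, 𝔪 n]) x) 2 μ
      = ENNReal.ofReal ‖Q n - Qinf‖ := by
    intro n
    have h1 : (fun x => (μ[f|𝔪 n]) x - (μ[f|⨅ n, 𝔪 n]) x) =ᵐ[μ] ((Q n - Qinf : Lp ℝ 2 μ) : Ω → ℝ) := by
      filter_upwards [condexp_ae_eq_condExpL2 (hle n) hf2,
        condexp_ae_eq_condExpL2 hinf hf2, Lp.coeFn_sub (Q n) Qinf] with x h1 h2 h3
      rw [h1, h2, h3]; rfl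
    rw [eLpNorm_congr_ae h1, Lp.norm_def,
      ENNReal.ofReal_toReal (Lp.eLpNorm_ne_top _)]
  simp only [heq]
  have : Tendsto (fun n => ENNReal.ofReal ‖Q n - Qinf‖) atTop (nhds (ENNReal.ofReal 0)) :=
    (ENNReal.continuous_ofReal.tendsto 0).comp hnorm0
  simpa using this

end PartA

/-- Rota's alternating convergence theorem: for the one-sided stationary Markov system, with
`P̃` the appending Markov operator and `P̃* = (Koopman operator of R)` its adjoint, the operators
`(P̃*)ⁿ P̃ⁿ f = (P̃ⁿ f) ∘ Rⁿ` converge in `L²(μ̃⁻)` to the conditional expectation of `f` onto the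
backwards tail σ-algebra `Φ_{-∞} = ⋂_n Φ_{≤ -n}`, for every `f ∈ L²(μ̃⁻)`. -/
theorem rota_alternating_convergence
    {X : Type*} [MeasurableSpace X] [StandardBorelSpace X]
    (P : Kernel X X) [IsMarkovKernel P]
    (μm : Measure (ℕ → X)) [IsProbabilityMeasure μm]
    (hMarkov : μm.bind (fun y =>
        (P (y 0)).map (fun z => fun n => if n = 0 then z else y (n - 1))) = μm)
    (f : (ℕ → X) → ℝ) (hf : Measurable f) (hf2 : MemLp f 2 μm) :
    Tendsto (fun n : ℕ =>
        eLpNorm (fun y : ℕ → X =>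
            ((appendOp P)^[n] f) (fun k => y (k + n)) -
              (μm[f | ⨅ n : ℕ, MeasurableSpace.comap
                  (fun y : ℕ → X => fun k : ℕ => y (k + n)) inferInstance]) y)
          2 μm)
      atTop (nhds 0) := by
  have hfi : Integrable f μm := hf2.integrable one_le_two
  have hle : ∀ n : ℕ, MeasurableSpace.comap
      (fun y : ℕ → X => fun k : ℕ => y (k + n)) inferInstance ≤
      (inferInstance : MeasurableSpace (ℕ → X)) :=
    fun n => (RotaAux.measurable_T (X := X) n).comap_le
  have hanti : Antitone (fun n : ℕ => MeasurableSpace.comap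
      (fun y : ℕ → X => fun k : ℕ => y (k + n)) inferInstance) := by
    intro n m hnm
    have hcomp : (fun (y : ℕ → X) (k : ℕ) => y (k + m))
        = (fun (y : ℕ → X) (k : ℕ) => y (k + (m - n))) ∘ (fun (y : ℕ → X) (k : ℕ) => y (k + n)) := by
      funext y k
      simp only [Function.comp_apply]
      congr 1
      omega
    dsimp only
    rw [hcomp, ← MeasurableSpace.comap_comp]
    exact MeasurableSpace.comap_mono (RotaAux.measurable_T (X := X) (m - n)).comap_le
  have hmain := tendsto_eLpNorm_condexp_iInf
    (fun n : ℕ => MeasurableSpace.comap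
      (fun y : ℕ → X => fun k : ℕ => y (k + n)) inferInstance) hle hanti hf2
  refine Tendsto.congr (fun n => ?_) hmain
  refine eLpNorm_congr_ae ?_
  have hB := RotaAux.appendOp_iterate_condexp P μm hMarkov hf hfi n
  filter_upwards [hB] with y hy
  rw [← hy]
end

section
/- Let S and T be commuting invertible μ-preserving transformations of a standard probability space (X, μ), and P(x, ·) := ½(δ_{Sx} + δ_{Tx}). Then for every f ∈ L¹(μ), ‖Pⁿf − E(f | Λ) ∘ Tⁿ‖₁ → 0 as n → ∞, where Λ is the σ-algebra of S⁻¹T-invariant sets. Here Pⁿf = 2⁻ⁿ Σ_{p+q=n} C(n,p) S^p T^q f (with S, T acting as Koopman operators). -/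
open Filter Finset MeasureTheory
open scoped ENNReal NNReal

set_option maxHeartbeats 1000000
set_option linter.unusedSectionVars false
set_option linter.unnecessarySimpa false

namespace BinKer

lemma choose_ascend {n p : ℕ} (h1 : 1 ≤ p) (h2 : 2 * p ≤ n + 1) :
    n.choose (p - 1) ≤ n.choose p := by
  obtain ⟨k, rfl⟩ : ∃ k, p = k + 1 := ⟨p - 1, by omega⟩
  simp only [Nat.add_sub_cancel]
  have key : n.choose k * (k + 1) ≤ n.choose (k + 1) * (k + 1) := by
    calc n.choose k * (k + 1) ≤ n.choose k * (n - k) :=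
          Nat.mul_le_mul_left _ (by omega)
      _ = n.choose (k + 1) * (k + 1) := (Nat.choose_succ_right_eq n k).symm
  exact Nat.le_of_mul_le_mul_right key (by omega)

lemma choose_descend {n p : ℕ} (h1 : n + 1 < 2 * p) (h2 : p ≤ n) :
    n.choose p ≤ n.choose (p - 1) := by
  have e1 : n.choose (n - p) = n.choose p := Nat.choose_symm h2
  have e2 : n.choose (n - (p - 1)) = n.choose (p - 1) := Nat.choose_symm (by omega)
  rw [← e1, ← e2]
  have h3 : n - (p - 1) = (n - p) + 1 := by omega
  rw [h3]
  have := choose_ascend (n := n) (p := n - p + 1) (by omega) (by omega)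
  simpa using this

lemma sum_abs_diff_le (n : ℕ) :
    ∑ p ∈ Finset.range (n + 2),
      |(if p = 0 then (0:ℝ) else n.choose (p - 1)) - n.choose p|
      ≤ 2 * n.choose ((n + 1) / 2) := by
  set m := (n + 1) / 2 with hm
  set F : ℕ → ℝ := fun p => (n.choose p : ℝ) with hF
  rw [Finset.range_eq_Ico, Finset.sum_eq_sum_Ico_succ_bot (by omega)]
  have h0 : |(if 0 = 0 then (0:ℝ) else n.choose (0 - 1)) - n.choose 0| = 1 := by
    simp
  rw [h0]
  have hsum1 : ∑ p ∈ Finset.Ico 1 (n + 2),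
      |(if p = 0 then (0:ℝ) else n.choose (p - 1)) - n.choose p|
      = ∑ i ∈ Finset.range (n + 1), |F i - F (i + 1)| := by
    rw [Finset.sum_Ico_eq_sum_range]
    refine Finset.sum_congr rfl fun i _ => ?_
    simp [hF, Nat.add_sub_cancel, add_comm 1 i]
  rw [hsum1]
  have hsplit : ∑ i ∈ Finset.range (n + 1), |F i - F (i + 1)|
      = (∑ i ∈ Finset.range m, |F i - F (i + 1)|)
        + ∑ i ∈ Finset.Ico m (n + 1), |F i - F (i + 1)| := by
    rw [Finset.range_eq_Ico, ← Finset.sum_Ico_consecutive _ (by omega : 0 ≤ m) (by omega : m ≤ n + 1),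
      ← Finset.range_eq_Ico]
  rw [hsplit]
  have h1 : ∑ i ∈ Finset.range m, |F i - F (i + 1)| = F m - F 0 := by
    have : ∀ i ∈ Finset.range m, |F i - F (i + 1)| = F (i + 1) - F i := by
      intro i hi
      rw [Finset.mem_range] at hi
      have hle : n.choose i ≤ n.choose (i + 1) := by
        have := choose_ascend (n := n) (p := i + 1) (by omega) (by omega)
        simpa using this
      rw [abs_sub_comm, abs_of_nonneg]
      simp only [hF, sub_nonneg]
      exact_mod_cast hle
    rw [Finset.sum_congr rfl this, Finset.sum_range_sub]
  have h2 : ∑ i ∈ Finset.Ico m (n + 1), |F i - F (i + 1)| = F m := by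
    have key : ∀ i ∈ Finset.Ico m (n + 1), |F i - F (i + 1)| = F i - F (i + 1) := by
      intro i hi
      rw [Finset.mem_Ico] at hi
      have hle : n.choose (i + 1) ≤ n.choose i := by
        rcases Nat.lt_or_ge (i + 1) (n + 1) with h | h
        · have := choose_descend (n := n) (p := i + 1) (by omega) (by omega)
          simpa using this
        · have : i = n := by omega
          subst this
          simp [Nat.choose_succ_self]
      rw [abs_of_nonneg]
      simp only [hF, sub_nonneg]
      exact_mod_cast hle
    rw [Finset.sum_congr rfl key, Finset.sum_Ico_eq_sum_range]
    have : ∀ j ∈ Finset.range (n + 1 - m), F (m + j) - F (m + j + 1)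
        = (fun j => F (m + j)) j - (fun j => F (m + j)) (j + 1) := by
      intro j _; simp [add_assoc]
    rw [Finset.sum_congr rfl this, Finset.sum_range_sub']
    have : m + (n + 1 - m) = n + 1 := by omega
    rw [this]
    simp [hF, Nat.choose_succ_self]
  rw [h1, h2]
  have hF0 : F 0 = 1 := by simp [hF]
  rw [hF0]
  ring_nf
  simp [hF]

lemma centralBinom_sq_le : ∀ k : ℕ, (2 * k + 1) * (Nat.centralBinom k) ^ 2 ≤ 16 ^ k := by
  intro k
  induction k with
  | zero => simp [Nat.centralBinom]
  | succ k ih =>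
    have h1 : (k + 1) * Nat.centralBinom (k + 1) = 2 * (2 * k + 1) * Nat.centralBinom k :=
      Nat.succ_mul_centralBinom_succ k
    have key : (k + 1) ^ 2 * ((2 * (k + 1) + 1) * Nat.centralBinom (k + 1) ^ 2)
        ≤ (k + 1) ^ 2 * 16 ^ (k + 1) := by
      have e1 : (k + 1) ^ 2 * ((2 * (k + 1) + 1) * Nat.centralBinom (k + 1) ^ 2)
          = (2 * k + 3) * ((k + 1) * Nat.centralBinom (k + 1)) ^ 2 := by ring
      rw [e1, h1]
      have e2 : (2 * k + 3) * (2 * (2 * k + 1) * Nat.centralBinom k) ^ 2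
          = (4 * (2 * k + 1) * (2 * k + 3)) * ((2 * k + 1) * Nat.centralBinom k ^ 2) := by ring
      rw [e2]
      calc (4 * (2 * k + 1) * (2 * k + 3)) * ((2 * k + 1) * Nat.centralBinom k ^ 2)
          ≤ (4 * (2 * k + 1) * (2 * k + 3)) * 16 ^ k := Nat.mul_le_mul_left _ ih
        _ ≤ (16 * (k + 1) ^ 2) * 16 ^ k := Nat.mul_le_mul_right _ (by nlinarith)
        _ = (k + 1) ^ 2 * 16 ^ (k + 1) := by ring
    exact Nat.le_of_mul_le_mul_left key (by positivity)

lemma choose_half_sq_le {n : ℕ} (hn : 1 ≤ n) :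
    ((n.choose (n / 2) : ℝ) / 2 ^ n) ^ 2 ≤ 1 / n := by
  have main : ∀ k : ℕ, ((Nat.centralBinom k : ℝ) / 4 ^ k) ^ 2 ≤ 1 / (2 * k + 1) := by
    intro k
    have h := centralBinom_sq_le k
    have h' : ((2 * k + 1 : ℕ) : ℝ) * (Nat.centralBinom k : ℝ) ^ 2 ≤ (16 : ℝ) ^ k := by
      exact_mod_cast h
    have h16 : ((4 : ℝ) ^ k) ^ 2 = 16 ^ k := by
      calc ((4 : ℝ) ^ k) ^ 2 = ((4:ℝ) ^ 2) ^ k := by rw [← pow_mul, ← pow_mul, mul_comm]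
        _ = 16 ^ k := by norm_num
    rw [div_pow, h16, div_le_div_iff₀ (by positivity) (by positivity)]
    push_cast at h' ⊢
    nlinarith [h']
  rcases Nat.even_or_odd n with ⟨k, hk⟩ | ⟨k, hk⟩
  · -- n = k + k
    have hn2 : n / 2 = k := by omega
    have hcb : n.choose (n / 2) = Nat.centralBinom k := by
      rw [hn2, Nat.centralBinom]; congr 1; omega
    have hpow : (2 : ℝ) ^ n = 4 ^ k := by
      rw [show n = 2 * k by omega, pow_mul]; norm_num
    rw [hcb, hpow]
    calc ((Nat.centralBinom k : ℝ) / 4 ^ k) ^ 2 ≤ 1 / (2 * k + 1) := main k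
      _ ≤ 1 / (n:ℝ) := by
          have hnr : (n : ℝ) = 2 * k := by exact_mod_cast (by omega : n = 2 * k)
          apply one_div_le_one_div_of_le
          · exact_mod_cast hn
          · rw [hnr]; linarith
  · -- n = 2 * k + 1
    have hn2 : n / 2 = k := by omega
    have hub : n.choose (n / 2) ≤ 2 * Nat.centralBinom k := by
      rw [hn2]
      rcases k with _ | j
      · simp [Nat.centralBinom]
      · have he : n = (2 * j + 2) + 1 := by omega
        rw [he, Nat.choose_succ_succ (2 * j + 2) j]
        have hb1 : (2 * j + 2).choose j ≤ (2 * j + 2).choose (j + 1) := by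
          have := Nat.choose_le_middle j (2 * j + 2)
          simpa [show (2 * j + 2) / 2 = j + 1 by omega] using this
        have hb2 : (2 * j + 2).choose (j + 1) = Nat.centralBinom (j + 1) := by
          rw [Nat.centralBinom, show 2 * (j + 1) = 2 * j + 2 from by ring]
        simp only [Nat.succ_eq_add_one]
        omega
    have hpow : (2 : ℝ) ^ n = 2 * 4 ^ k := by
      rw [show n = 2 * k + 1 by omega, pow_succ, pow_mul]; norm_num [mul_comm]
    have hstep : ((n.choose (n / 2) : ℝ) / 2 ^ n) ≤ (Nat.centralBinom k : ℝ) / 4 ^ k := by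
      rw [hpow]
      rw [div_le_div_iff₀ (by positivity) (by positivity)]
      have : (n.choose (n / 2) : ℝ) ≤ 2 * Nat.centralBinom k := by exact_mod_cast hub
      nlinarith [this, pow_pos (by norm_num : (0:ℝ) < 4) k]
    have hnn : (0:ℝ) ≤ (n.choose (n / 2) : ℝ) / 2 ^ n := by positivity
    calc ((n.choose (n / 2) : ℝ) / 2 ^ n) ^ 2
        ≤ ((Nat.centralBinom k : ℝ) / 4 ^ k) ^ 2 := by
          exact pow_le_pow_left₀ hnn hstep 2
      _ ≤ 1 / (2 * (k:ℝ) + 1) := main k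
      _ = 1 / (n:ℝ) := by
          have hnr : (n : ℝ) = 2 * k + 1 := by exact_mod_cast (by omega : n = 2 * k + 1)
          rw [hnr]
  
lemma tendsto_choose_half_div :
    Tendsto (fun n : ℕ => (n.choose (n / 2) : ℝ) / 2 ^ n) atTop (nhds 0) := by
  have hsq : Tendsto (fun n : ℕ => Real.sqrt (1 / n)) atTop (nhds 0) := by
    have h0 : Tendsto (fun n : ℕ => 1 / (n : ℝ)) atTop (nhds 0) :=
      tendsto_one_div_atTop_nhds_zero_nat
    have h1 : Tendsto (Real.sqrt ∘ fun n : ℕ => 1 / (n:ℝ)) atTop (nhds (Real.sqrt 0)) :=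
      (Real.continuous_sqrt.tendsto 0).comp h0
    rw [Real.sqrt_zero] at h1
    exact h1
  apply squeeze_zero' (Eventually.of_forall fun n => by positivity)
    ((eventually_ge_atTop 1).mono fun n hn => ?_) hsq
  have h := choose_half_sq_le hn
  have hnn : (0:ℝ) ≤ (n.choose (n / 2) : ℝ) / 2 ^ n := by positivity
  calc (n.choose (n / 2) : ℝ) / 2 ^ n = Real.sqrt (((n.choose (n / 2) : ℝ) / 2 ^ n) ^ 2) := by
        rw [Real.sqrt_sq hnn]
    _ ≤ Real.sqrt (1 / n) := Real.sqrt_le_sqrt h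

section NormedSpace

variable {E : Type*} [NormedAddCommGroup E] [NormedSpace ℝ E]

/-- The binomial average operator `2⁻ⁿ ∑ C(n,p) Uᵖ`. -/
noncomputable def bop (U : E →L[ℝ] E) (n : ℕ) : E →L[ℝ] E :=
  ((2:ℝ) ^ n)⁻¹ • ∑ p ∈ Finset.range (n + 1), ((n.choose p : ℝ)) • U ^ p

lemma bop_apply (U : E →L[ℝ] E) (n : ℕ) (x : E) :
    bop U n x = ((2:ℝ) ^ n)⁻¹ • ∑ p ∈ Finset.range (n + 1), (n.choose p : ℝ) • (U ^ p) x := by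
  simp [bop, ContinuousLinearMap.sum_apply]

lemma norm_pow_apply_le {U : E →L[ℝ] E} (hU : ‖U‖ ≤ 1) (p : ℕ) (x : E) :
    ‖(U ^ p) x‖ ≤ ‖x‖ := by
  induction p generalizing x with
  | zero => simp
  | succ p ih =>
    rw [pow_succ, ContinuousLinearMap.mul_apply]
    calc ‖(U ^ p) (U x)‖ ≤ ‖U x‖ := ih (U x)
      _ ≤ ‖x‖ := by simpa using U.le_of_opNorm_le hU x

lemma norm_bop_apply_le {U : E →L[ℝ] E} (hU : ‖U‖ ≤ 1) (n : ℕ) (x : E) :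
    ‖bop U n x‖ ≤ ‖x‖ := by
  rw [bop_apply, norm_smul]
  have h1 : ‖∑ p ∈ Finset.range (n + 1), (n.choose p : ℝ) • (U ^ p) x‖
      ≤ ∑ p ∈ Finset.range (n + 1), (n.choose p : ℝ) * ‖x‖ := by
    refine norm_sum_le_of_le _ fun p _ => ?_
    rw [norm_smul, Real.norm_natCast]
    exact mul_le_mul_of_nonneg_left (norm_pow_apply_le hU p x) (Nat.cast_nonneg _)
  have h2 : ∑ p ∈ Finset.range (n + 1), (n.choose p : ℝ) * ‖x‖ = 2 ^ n * ‖x‖ := by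
    rw [← Finset.sum_mul]
    congr 1
    exact_mod_cast congrArg (Nat.cast (R := ℝ)) (Nat.sum_range_choose n)
  calc ‖((2:ℝ) ^ n)⁻¹‖ * ‖∑ p ∈ Finset.range (n + 1), (n.choose p : ℝ) • (U ^ p) x‖
      ≤ ‖((2:ℝ) ^ n)⁻¹‖ * (2 ^ n * ‖x‖) := by
        exact mul_le_mul_of_nonneg_left (h1.trans h2.le) (norm_nonneg _)
    _ = ‖x‖ := by
        rw [norm_inv, norm_pow, Real.norm_ofNat]
        field_simp

lemma bop_apply_fixed {U : E →L[ℝ] E} {x : E} (hx : U x = x) (n : ℕ) :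
    bop U n x = x := by
  have hp : ∀ p, (U ^ p) x = x := by
    intro p
    induction p with
    | zero => simp
    | succ p ih => rw [pow_succ, ContinuousLinearMap.mul_apply, hx, ih]
  rw [bop_apply]
  simp only [hp, ← Finset.sum_smul]
  rw [smul_smul]
  have : (∑ p ∈ Finset.range (n + 1), (n.choose p : ℝ)) = 2 ^ n := by
    exact_mod_cast congrArg (Nat.cast (R := ℝ)) (Nat.sum_range_choose n)
  rw [this, inv_mul_cancel₀ (by positivity), one_smul]

lemma norm_bop_cobound_le {U : E →L[ℝ] E} (hU : ‖U‖ ≤ 1) (n : ℕ) (w : E) :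
    ‖bop U n (U w - w)‖ ≤ 2 * (n.choose (n / 2) : ℝ) / 2 ^ n * ‖w‖ := by
  have key : bop U n (U w - w) = ((2:ℝ) ^ n)⁻¹ •
      ∑ p ∈ Finset.range (n + 2),
        ((if p = 0 then (0:ℝ) else n.choose (p - 1)) - n.choose p) • (U ^ p) w := by
    rw [bop_apply]
    congr 1
    have hterm : ∀ p : ℕ, (U ^ p) (U w - w) = (U ^ (p + 1)) w - (U ^ p) w := by
      intro p
      rw [pow_succ, ContinuousLinearMap.mul_apply]
      exact map_sub _ _ _
    simp only [hterm, smul_sub, sub_smul, Finset.sum_sub_distrib]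
    congr 1
    · -- ∑_{p<n+1} C(n,p) • U^{p+1} w = ∑_{p<n+2} (if p=0 then 0 else C(n,p-1)) • U^p w
      rw [Finset.sum_range_succ' (fun p => ((if p = 0 then (0:ℝ) else n.choose (p - 1)) : ℝ) • (U ^ p) w) (n + 1)]
      simp
    · -- ∑_{p<n+1} C(n,p) • U^p w = ∑_{p<n+2} C(n,p) • U^p w
      rw [Finset.sum_range_succ (fun p => ((n.choose p : ℝ)) • (U ^ p) w) (n + 1)]
      simp [Nat.choose_succ_self]
  rw [key, norm_smul, norm_inv, norm_pow, Real.norm_ofNat]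
  have h1 : ‖∑ p ∈ Finset.range (n + 2),
      ((if p = 0 then (0:ℝ) else n.choose (p - 1)) - n.choose p) • (U ^ p) w‖
      ≤ (2 * (n.choose ((n + 1) / 2) : ℝ)) * ‖w‖ := by
    calc ‖∑ p ∈ Finset.range (n + 2),
        ((if p = 0 then (0:ℝ) else n.choose (p - 1)) - n.choose p) • (U ^ p) w‖
        ≤ ∑ p ∈ Finset.range (n + 2),
            |(if p = 0 then (0:ℝ) else n.choose (p - 1)) - n.choose p| * ‖w‖ := by
          refine norm_sum_le_of_le _ fun p _ => ?_
          rw [norm_smul, Real.norm_eq_abs]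
          exact mul_le_mul_of_nonneg_left (norm_pow_apply_le hU p w) (abs_nonneg _)
      _ ≤ (2 * (n.choose ((n + 1) / 2) : ℝ)) * ‖w‖ := by
          rw [← Finset.sum_mul]
          exact mul_le_mul_of_nonneg_right (sum_abs_diff_le n) (norm_nonneg _)
  have h2 : (2 * (n.choose ((n + 1) / 2) : ℝ)) ≤ 2 * (n.choose (n / 2) : ℝ) := by
    have := Nat.choose_le_middle ((n + 1) / 2) n
    have : ((n.choose ((n + 1) / 2) : ℕ) : ℝ) ≤ ((n.choose (n / 2) : ℕ) : ℝ) := by exact_mod_cast this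
    linarith
  calc ((2:ℝ) ^ n)⁻¹ * ‖∑ p ∈ Finset.range (n + 2),
      ((if p = 0 then (0:ℝ) else n.choose (p - 1)) - n.choose p) • (U ^ p) w‖
      ≤ ((2:ℝ) ^ n)⁻¹ * ((2 * (n.choose (n / 2) : ℝ)) * ‖w‖) := by
        refine mul_le_mul_of_nonneg_left (h1.trans ?_) (by positivity)
        exact mul_le_mul_of_nonneg_right h2 (norm_nonneg _)
    _ = 2 * (n.choose (n / 2) : ℝ) / 2 ^ n * ‖w‖ := by ring

lemma bop_tendsto_zero {U : E →L[ℝ] E} (hU : ‖U‖ ≤ 1) {x : E}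
    (hx : x ∈ closure (Set.range fun w => U w - w)) :
    Tendsto (fun n => bop U n x) atTop (nhds 0) := by
  rw [NormedAddCommGroup.tendsto_nhds_zero]
  intro ε hε
  obtain ⟨y, hy, hxy⟩ : ∃ y ∈ Set.range (fun w => U w - w), ‖x - y‖ < ε / 2 := by
    obtain ⟨y, hys, hd⟩ := Metric.mem_closure_iff.mp hx (ε / 2) (by positivity)
    exact ⟨y, hys, by rwa [dist_eq_norm] at hd⟩
  obtain ⟨w, rfl⟩ := hy
  have hdecay : Tendsto (fun n : ℕ => 2 * (n.choose (n / 2) : ℝ) / 2 ^ n * ‖w‖)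
      atTop (nhds 0) := by
    have h := (tendsto_choose_half_div.const_mul (2:ℝ)).mul_const ‖w‖
    simp only [mul_zero, zero_mul] at h
    refine h.congr fun n => ?_
    ring
  filter_upwards [hdecay.eventually (gt_mem_nhds (half_pos hε))] with n hn
  have hsplit : bop U n x = bop U n (x - (U w - w)) + bop U n (U w - w) := by
    rw [← map_add]
    congr 1
    abel
  calc ‖bop U n x‖ ≤ ‖bop U n (x - (U w - w))‖ + ‖bop U n (U w - w)‖ := by
        rw [hsplit]; exact norm_add_le _ _
    _ ≤ ‖x - (U w - w)‖ + 2 * (n.choose (n / 2) : ℝ) / 2 ^ n * ‖w‖ :=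
        add_le_add (norm_bop_apply_le hU n _) (norm_bop_cobound_le hU n w)
    _ < ε / 2 + ε / 2 := add_lt_add hxy hn
    _ = ε := add_halves ε

end NormedSpace

section Hilbert

variable {E : Type*} [NormedAddCommGroup E] [InnerProductSpace ℝ E] [CompleteSpace E]

lemma mem_closure_range_sub {U : E →L[ℝ] E} (hU : ‖U‖ ≤ 1) {x : E}
    (hx : ∀ y, U y = y → inner (𝕜 := ℝ) x y = 0) :
    x ∈ closure (Set.range fun w => U w - w) := by
  set R : Submodule ℝ E := LinearMap.range ((U : E →ₗ[ℝ] E) - 1) with hR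
  have hRset : (R : Set E) = Set.range (fun w => U w - w) := by
    ext z
    simp [hR, LinearMap.mem_range, LinearMap.sub_apply]
  have hRK : Rᗮ ≤ LinearMap.eqLocus (U : E →ₗ[ℝ] E) 1 := by
    intro y hy
    have hle : ‖U y‖ ≤ ‖y‖ := by simpa using U.le_of_opNorm_le hU y
    have hmem : U y - y ∈ R := ⟨y, by simp [LinearMap.sub_apply]⟩
    have h0 : inner (𝕜 := ℝ) (U y - y) y = 0 :=
      (Submodule.mem_orthogonal R y).mp hy _ hmem
    have hinner : inner (𝕜 := ℝ) (U y) y = ‖y‖ ^ 2 := by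
      have := inner_sub_left (𝕜 := ℝ) (U y) y y
      rw [h0] at this
      have h2 : inner (𝕜 := ℝ) (U y) y = inner (𝕜 := ℝ) y y := by linarith [this.symm]
      rw [h2, real_inner_self_eq_norm_sq]
    have := eq_of_norm_le_re_inner_eq_norm_sq (𝕜 := ℝ) hle (by simpa using hinner)
    simpa [LinearMap.mem_eqLocus] using this
  have hxK : x ∈ (LinearMap.eqLocus (U : E →ₗ[ℝ] E) 1)ᗮ := by
    rw [Submodule.mem_orthogonal]
    intro u hu
    have hu' : U u = u := hu
    rw [real_inner_comm]
    exact hx u hu'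
  have hxR : x ∈ Rᗮᗮ := (Submodule.orthogonal_le hRK) hxK
  rw [Submodule.orthogonal_orthogonal_eq_closure] at hxR
  have : x ∈ (R.topologicalClosure : Set E) := hxR
  rw [Submodule.topologicalClosure_coe, hRset] at this
  exact this

end Hilbert

section Measure

variable {X : Type*} [MeasurableSpace X] {μ : Measure X}

/-- Binomial Koopman average at the function level. -/
noncomputable def bavg (Q : X → X) (f : X → ℝ) (n : ℕ) : X → ℝ :=
  fun y => ((2:ℝ) ^ n)⁻¹ * ∑ p ∈ Finset.range (n + 1), (n.choose p : ℝ) * f (Q^[p] y)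

lemma bavg_eq_smul_sum (Q : X → X) (f : X → ℝ) (n : ℕ) :
    bavg Q f n
      = ((2:ℝ) ^ n)⁻¹ • ∑ p ∈ Finset.range (n + 1), (n.choose p : ℝ) • (f ∘ Q^[p]) := by
  funext y
  simp [bavg, Finset.sum_apply, smul_eq_mul]

lemma integrable_comp_iterate {Q : X → X} (hQ : MeasurePreserving Q μ μ) {f : X → ℝ}
    (hf : Integrable f μ) (p : ℕ) : Integrable (f ∘ Q^[p]) μ :=
  memLp_one_iff_integrable.mp
    ((memLp_one_iff_integrable.mpr hf).comp_measurePreserving (hQ.iterate p))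

lemma integrable_bavg {Q : X → X} (hQ : MeasurePreserving Q μ μ) {f : X → ℝ}
    (hf : Integrable f μ) (n : ℕ) : Integrable (bavg Q f n) μ := by
  unfold bavg
  exact (integrable_finset_sum _ fun p _ =>
    ((integrable_comp_iterate hQ hf p).const_mul ((n.choose p : ℝ)))).const_mul _

lemma eLpNorm_bavg_le {Q : X → X} (hQ : MeasurePreserving Q μ μ) {f : X → ℝ}
    (hf : AEStronglyMeasurable f μ) (n : ℕ) :
    eLpNorm (bavg Q f n) 1 μ ≤ eLpNorm f 1 μ := by
  rw [bavg_eq_smul_sum]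
  have hcomp : ∀ p : ℕ, AEStronglyMeasurable (f ∘ Q^[p]) μ := fun p =>
    hf.comp_quasiMeasurePreserving (hQ.iterate p).quasiMeasurePreserving
  have step1 : eLpNorm (((2:ℝ) ^ n)⁻¹ •
        ∑ p ∈ Finset.range (n + 1), (n.choose p : ℝ) • (f ∘ Q^[p])) 1 μ
      = ‖((2:ℝ) ^ n)⁻¹‖₊ •
        eLpNorm (∑ p ∈ Finset.range (n + 1), (n.choose p : ℝ) • (f ∘ Q^[p])) 1 μ :=
    eLpNorm_const_smul _ _ _ _
  rw [step1]
  have step2 : eLpNorm (∑ p ∈ Finset.range (n + 1), (n.choose p : ℝ) • (f ∘ Q^[p])) 1 μ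
      ≤ ∑ p ∈ Finset.range (n + 1), (n.choose p : ℝ≥0∞) * eLpNorm f 1 μ := by
    refine le_trans (eLpNorm_sum_le (fun p _ => (hcomp p).const_smul _) le_rfl) ?_
    refine Finset.sum_le_sum fun p _ => ?_
    rw [eLpNorm_const_smul _ _ _ _,
      eLpNorm_comp_measurePreserving hf (hQ.iterate p)]
    apply le_of_eq
    congr 1
    rw [Real.enorm_natCast]
  calc ‖((2:ℝ) ^ n)⁻¹‖₊ •
        eLpNorm (∑ p ∈ Finset.range (n + 1), (n.choose p : ℝ) • (f ∘ Q^[p])) 1 μ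
      ≤ ‖((2:ℝ) ^ n)⁻¹‖₊ •
        ∑ p ∈ Finset.range (n + 1), (n.choose p : ℝ≥0∞) * eLpNorm f 1 μ := by
        rw [ENNReal.smul_def, ENNReal.smul_def]
        gcongr
    _ = eLpNorm f 1 μ := by
        rw [ENNReal.smul_def, smul_eq_mul, ← Finset.sum_mul, ← mul_assoc]
        have hsum : ∑ p ∈ Finset.range (n + 1), (n.choose p : ℝ≥0∞) = 2 ^ n := by
          rw [← Nat.cast_sum]
          exact_mod_cast congrArg (Nat.cast (R := ℝ≥0∞)) (Nat.sum_range_choose n)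
        have hnorm : (‖((2:ℝ) ^ n)⁻¹‖₊ : ℝ≥0∞) = (2 ^ n)⁻¹ := by
          rw [nnnorm_inv, nnnorm_pow]
          simp [ENNReal.coe_inv, ENNReal.coe_pow]
        rw [hsum, hnorm, ENNReal.inv_mul_cancel (by positivity) (by simp), one_mul]

lemma invariants_symm (Q : X ≃ᵐ X) :
    MeasurableSpace.invariants (⇑Q.symm) = MeasurableSpace.invariants ⇑Q := by
  have key : ∀ (e : X ≃ᵐ X) (s : Set X), ⇑e ⁻¹' s = s → ⇑e.symm ⁻¹' s = s := by
    intro e s h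
    conv_lhs => rw [← h]
    rw [← Set.preimage_comp]
    have : ⇑e ∘ ⇑e.symm = id := funext e.apply_symm_apply
    rw [this, Set.preimage_id]
  refine MeasurableSpace.ext fun s => ?_
  rw [MeasurableSpace.measurableSet_invariants, MeasurableSpace.measurableSet_invariants]
  constructor
  · rintro ⟨hs, h⟩
    refine ⟨hs, ?_⟩
    have := key Q.symm s h
    simpa using this
  · rintro ⟨hs, h⟩
    exact ⟨hs, key Q s h⟩

lemma comp_eq_self_of_invariants_measurable {Q : X → X} {g : X → ℝ}
    (hg : Measurable[MeasurableSpace.invariants Q] g) (x : X) : g (Q x) = g x := by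
  have h := (MeasurableSpace.measurable_invariants_dom.mp hg).2 {g x}
    (measurableSet_singleton _)
  have hx : x ∈ (g ∘ Q) ⁻¹' {g x} := by
    rw [h]
    exact rfl
  simpa using hx

lemma iterate_eq_self {Q : X → X} {g : X → ℝ} (h : ∀ x, g (Q x) = g x) (p : ℕ) (x : X) :
    g (Q^[p] x) = g x := by
  induction p generalizing x with
  | zero => simp
  | succ p ih => rw [Function.iterate_succ_apply, ih, h]

lemma exists_invariant_version (Q : X ≃ᵐ X) (hQ : MeasurePreserving ⇑Q μ μ)
    {v : X → ℝ} (hv : Measurable v) (hQv : (fun x => v (Q x)) =ᵐ[μ] v) :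
    ∃ v' : X → ℝ, Measurable[MeasurableSpace.invariants ⇑Q] v' ∧ v' =ᵐ[μ] v := by
  refine ⟨fun x => limsup (fun n => v ((⇑Q)^[n] x)) atTop, ?_, ?_⟩
  · rw [MeasurableSpace.measurable_invariants_dom]
    have hmeas : Measurable fun x => limsup (fun n => v ((⇑Q)^[n] x)) atTop :=
      Measurable.limsup fun n => hv.comp (Q.measurable.iterate n)
    refine ⟨hmeas, fun s _ => ?_⟩
    have hinv : ((fun x => limsup (fun n => v ((⇑Q)^[n] x)) atTop) ∘ ⇑Q)
        = fun x => limsup (fun n => v ((⇑Q)^[n] x)) atTop := by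
      funext x
      show limsup (fun n => v ((⇑Q)^[n] (Q x))) atTop = _
      have h1 : (fun n => v ((⇑Q)^[n] (Q x))) = fun n => v ((⇑Q)^[n + 1] x) := by
        funext n
        rw [Function.iterate_succ_apply]
      rw [h1]
      exact limsup_nat_add (fun n => v ((⇑Q)^[n] x)) 1
    rw [hinv]
  · have hiter : ∀ p : ℕ, (fun x => v ((⇑Q)^[p] x)) =ᵐ[μ] v := by
      intro p
      induction p with
      | zero => simp
      | succ p ih =>
        have h2 : (fun x => v ((⇑Q)^[p] (Q x))) =ᵐ[μ] fun x => v (Q x) :=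
          hQ.quasiMeasurePreserving.ae_eq_comp ih
        have h3 : (fun x => v ((⇑Q)^[p + 1] x)) =ᵐ[μ] fun x => v (Q x) := by
          simpa [Function.iterate_succ_apply] using h2
        exact h3.trans hQv
    have hae : ∀ᵐ x ∂μ, ∀ p : ℕ, v ((⇑Q)^[p] x) = v x := ae_all_iff.mpr hiter
    filter_upwards [hae] with x hx
    simp only [hx]
    exact limsup_const _

-- coeFn of finite sums in Lp
lemma Lp_coeFn_sum {ι : Type*} (s : Finset ι) (F : ι → Lp ℝ 2 μ) :
    ((∑ i ∈ s, F i : Lp ℝ 2 μ) : X → ℝ) =ᵐ[μ] fun x => ∑ i ∈ s, (F i : X → ℝ) x := by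
  classical
  induction s using Finset.induction_on with
  | empty =>
    simp only [Finset.sum_empty]
    exact Lp.coeFn_zero ℝ 2 μ
  | @insert a s hni ih =>
    rw [Finset.sum_insert hni]
    refine (Lp.coeFn_add _ _).trans ?_
    filter_upwards [ih] with x hx
    simp only [Pi.add_apply, hx, Finset.sum_insert hni]

theorem l2core [IsProbabilityMeasure μ] (Q : X ≃ᵐ X) (hQ : MeasurePreserving ⇑Q μ μ)
    {w : X → ℝ} (hw : MemLp w 2 μ)
    (hcond : μ[w | MeasurableSpace.invariants ⇑Q] =ᵐ[μ] 0) :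
    Tendsto (fun n => eLpNorm (bavg ⇑Q w n) 2 μ) atTop (nhds 0) := by
  haveI : Fact ((1:ℝ≥0∞) ≤ 2) := ⟨one_le_two⟩
  have hm : MeasurableSpace.invariants ⇑Q ≤ ‹MeasurableSpace X› :=
    MeasurableSpace.invariants_le _
  haveI : SigmaFinite (μ.trim hm) := by infer_instance
  set U : Lp ℝ 2 μ →L[ℝ] Lp ℝ 2 μ :=
    (Lp.compMeasurePreservingₗᵢ ℝ ⇑Q hQ).toContinuousLinearMap with hUdef
  have hU : ‖U‖ ≤ 1 := LinearIsometry.norm_toContinuousLinearMap_le _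
  have hUapply : ∀ g : Lp ℝ 2 μ, (U g : X → ℝ) =ᵐ[μ] (g : X → ℝ) ∘ ⇑Q := fun g =>
    Lp.coeFn_compMeasurePreserving g hQ
  set W := hw.toLp w with hWdef
  have hWcoe : (W : X → ℝ) =ᵐ[μ] w := MemLp.coeFn_toLp hw
  have hwint : Integrable w μ := hw.integrable one_le_two
  have hpow : ∀ p : ℕ, ((U ^ p) W : X → ℝ) =ᵐ[μ] fun x => w ((⇑Q)^[p] x) := by
    intro p
    induction p with
    | zero => simpa using hWcoe
    | succ p ih =>
      have h1 : (U ^ (p + 1)) W = U ((U ^ p) W) := by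
        rw [pow_succ', ContinuousLinearMap.mul_apply]
      rw [h1]
      refine (hUapply _).trans ?_
      have h2 := hQ.quasiMeasurePreserving.ae_eq_comp ih
      refine h2.trans ?_
      refine Filter.EventuallyEq.of_eq ?_
      funext x
      simp [Function.comp, Function.iterate_succ_apply]
  -- orthogonality of W to fixed vectors
  have horth : ∀ V : Lp ℝ 2 μ, U V = V → inner (𝕜 := ℝ) W V = 0 := by
    intro V hV
    have hVQ : ((V : X → ℝ) ∘ ⇑Q) =ᵐ[μ] (V : X → ℝ) := by
      have h := hUapply V
      rw [hV] at h
      exact h.symm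
    obtain ⟨v₀, hv₀m, hv₀⟩ : ∃ v₀, StronglyMeasurable v₀ ∧ (V : X → ℝ) =ᵐ[μ] v₀ :=
      ⟨(Lp.aestronglyMeasurable V).mk _,
        (Lp.aestronglyMeasurable V).stronglyMeasurable_mk,
        (Lp.aestronglyMeasurable V).ae_eq_mk⟩
    have hv₀meas : Measurable v₀ := hv₀m.measurable
    have hv₀Q : (fun x => v₀ (Q x)) =ᵐ[μ] v₀ := by
      have h1 : (fun x => v₀ (Q x)) =ᵐ[μ] fun x => (V : X → ℝ) (Q x) :=
        hQ.quasiMeasurePreserving.ae_eq_comp hv₀.symm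
      exact h1.trans (hVQ.trans hv₀)
    obtain ⟨v', hv'meas, hv'eq⟩ := exists_invariant_version Q hQ hv₀meas hv₀Q
    have hv'V : v' =ᵐ[μ] (V : X → ℝ) := hv'eq.trans hv₀.symm
    have hv'2 : MemLp v' 2 μ := (Lp.memLp V).ae_eq hv'V.symm
    have hint : Integrable (v' * w) μ := by
      have h := L2.integrable_inner (𝕜 := ℝ) (hv'2.toLp v') W
      refine h.congr ?_
      filter_upwards [hv'2.coeFn_toLp, hWcoe] with x h1 h2
      simp [h1, h2, RCLike.inner_apply, starRingEnd_apply, mul_comm]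
    have hsm : StronglyMeasurable[MeasurableSpace.invariants ⇑Q] v' :=
      hv'meas.stronglyMeasurable
    have hpull : μ[v' * w|MeasurableSpace.invariants ⇑Q] =ᵐ[μ] v' * μ[w|MeasurableSpace.invariants ⇑Q] :=
      condExp_mul_of_stronglyMeasurable_left hsm hint hwint
    have hI : ∫ x, v' x * w x ∂μ = 0 := by
      have h1 : ∫ x, (v' * w) x ∂μ = ∫ x, (μ[v' * w|MeasurableSpace.invariants ⇑Q]) x ∂μ :=
        (integral_condExp hm).symm
      have h2 : ∫ x, (μ[v' * w|MeasurableSpace.invariants ⇑Q]) x ∂μ = ∫ x, (v' * μ[w|MeasurableSpace.invariants ⇑Q]) x ∂μ :=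
        integral_congr_ae hpull
      have h3 : (v' * μ[w|MeasurableSpace.invariants ⇑Q]) =ᵐ[μ] 0 := by
        filter_upwards [hcond] with x hx
        simp only [Pi.zero_apply] at hx
        simp only [Pi.mul_apply, Pi.zero_apply, hx, mul_zero]
      have h4 : ∫ x, (v' * μ[w|MeasurableSpace.invariants ⇑Q]) x ∂μ = 0 := by
        rw [integral_congr_ae h3]
        simp
      calc ∫ x, v' x * w x ∂μ = ∫ x, (v' * w) x ∂μ := rfl
        _ = 0 := by rw [h1, h2, h4]
    calc inner (𝕜 := ℝ) W V = ∫ x, (W : X → ℝ) x * (V : X → ℝ) x ∂μ := by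
          rw [L2.inner_def]
          refine integral_congr_ae (Filter.Eventually.of_forall fun x => ?_)
          simp [RCLike.inner_apply, starRingEnd_apply, mul_comm]
      _ = ∫ x, v' x * w x ∂μ := by
          refine integral_congr_ae ?_
          filter_upwards [hWcoe, hv'V] with x h1 h2
          rw [h1, ← h2, mul_comm]
      _ = 0 := hI
  have hWcl : W ∈ closure (Set.range fun z => U z - z) := mem_closure_range_sub hU horth
  have htend : Tendsto (fun n => bop U n W) atTop (nhds 0) := bop_tendsto_zero hU hWcl
  have hnorm : Tendsto (fun n => ‖bop U n W‖) atTop (nhds 0) := by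
    simpa using htend.norm
  have hofReal : Tendsto (fun n => ENNReal.ofReal ‖bop U n W‖) atTop (nhds 0) := by
    have h := (ENNReal.continuous_ofReal.tendsto 0).comp hnorm
    rw [ENNReal.ofReal_zero] at h
    exact h
  refine hofReal.congr fun n => ?_
  -- eLpNorm (bavg ⇑Q w n) 2 μ = ENNReal.ofReal ‖bop U n W‖
  have hbopcoe : ((bop U n W : Lp ℝ 2 μ) : X → ℝ) =ᵐ[μ] bavg ⇑Q w n := by
    have hcoe1 : ∀ᵐ x ∂μ, ∀ p : ℕ, ((U ^ p) W : X → ℝ) x = w ((⇑Q)^[p] x) :=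
      ae_all_iff.mpr hpow
    have hcoe2 : ∀ᵐ x ∂μ, ∀ p : ℕ,
        (((((n.choose p : ℝ)) • ((U ^ p) W) : Lp ℝ 2 μ)) : X → ℝ) x
          = (n.choose p : ℝ) * (((U ^ p) W : Lp ℝ 2 μ) : X → ℝ) x :=
      ae_all_iff.mpr fun p => by
        filter_upwards [Lp.coeFn_smul ((n.choose p : ℝ)) ((U ^ p) W)] with x hx
        rw [hx]
        simp
    have hsum := Lp_coeFn_sum (Finset.range (n + 1))
      (fun p => ((n.choose p : ℝ)) • ((U ^ p) W))
    have hsm := Lp.coeFn_smul (((2:ℝ) ^ n)⁻¹)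
      (∑ p ∈ Finset.range (n + 1), ((n.choose p : ℝ)) • ((U ^ p) W))
    have hb : bop U n W = (((2:ℝ) ^ n)⁻¹ : ℝ) •
        (∑ p ∈ Finset.range (n + 1), ((n.choose p : ℝ)) • ((U ^ p) W)) := bop_apply U n W
    rw [hb]
    filter_upwards [hcoe1, hcoe2, hsum, hsm] with x h1 h2 h3 h4
    rw [h4]
    simp only [Pi.smul_apply, smul_eq_mul, h3]
    show ((2:ℝ) ^ n)⁻¹ * _
        = ((2:ℝ) ^ n)⁻¹ * ∑ p ∈ Finset.range (n + 1), (n.choose p : ℝ) * w ((⇑Q)^[p] x)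
    congr 1
    refine Finset.sum_congr rfl fun p _ => ?_
    rw [h2 p, h1 p]
  rw [← eLpNorm_congr_ae hbopcoe, Lp.norm_def,
    ENNReal.ofReal_toReal (Lp.eLpNorm_ne_top _)]

theorem core [IsProbabilityMeasure μ] (Q : X ≃ᵐ X) (hQ : MeasurePreserving ⇑Q μ μ)
    {f : X → ℝ} (hf : Integrable f μ) :
    Tendsto (fun n => eLpNorm
        (fun y => bavg ⇑Q f n y - (μ[f|MeasurableSpace.invariants ⇑Q]) y) 1 μ)
      atTop (nhds 0) := by
  have hm : MeasurableSpace.invariants ⇑Q ≤ ‹MeasurableSpace X› :=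
    MeasurableSpace.invariants_le _
  haveI : SigmaFinite (μ.trim hm) := inferInstance
  have hgint : Integrable (μ[f|MeasurableSpace.invariants ⇑Q]) μ := integrable_condExp
  have hgmeas : Measurable[MeasurableSpace.invariants ⇑Q]
      (μ[f|MeasurableSpace.invariants ⇑Q]) := stronglyMeasurable_condExp.measurable
  have hginv : ∀ x, (μ[f|MeasurableSpace.invariants ⇑Q]) (Q x)
      = (μ[f|MeasurableSpace.invariants ⇑Q]) x :=
    comp_eq_self_of_invariants_measurable hgmeas
  have hu : Integrable (f - μ[f|MeasurableSpace.invariants ⇑Q]) μ := hf.sub hgint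
  have hcondu : μ[f - μ[f|MeasurableSpace.invariants ⇑Q]|MeasurableSpace.invariants ⇑Q]
      =ᵐ[μ] 0 := by
    have h1 := condExp_sub (m := MeasurableSpace.invariants ⇑Q) (μ := μ) hf hgint
    have h2 : μ[μ[f|MeasurableSpace.invariants ⇑Q]|MeasurableSpace.invariants ⇑Q]
        = μ[f|MeasurableSpace.invariants ⇑Q] :=
      condExp_of_stronglyMeasurable hm stronglyMeasurable_condExp hgint
    refine h1.trans ?_
    rw [h2]
    refine Filter.EventuallyEq.of_eq ?_
    exact sub_self _
  have hkey : ∀ n, (fun y => bavg ⇑Q f n y - (μ[f|MeasurableSpace.invariants ⇑Q]) y)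
      = bavg ⇑Q (f - μ[f|MeasurableSpace.invariants ⇑Q]) n := by
    intro n
    funext y
    have h2n : (∑ p ∈ Finset.range (n + 1), (n.choose p : ℝ)) = 2 ^ n := by
      exact_mod_cast congrArg (Nat.cast (R := ℝ)) (Nat.sum_range_choose n)
    have hgsum : ∑ p ∈ Finset.range (n + 1),
        (n.choose p : ℝ) * (μ[f|MeasurableSpace.invariants ⇑Q]) ((⇑Q)^[p] y)
        = 2 ^ n * (μ[f|MeasurableSpace.invariants ⇑Q]) y := by
      rw [Finset.sum_congr rfl fun p _ => by rw [iterate_eq_self hginv p y], ← Finset.sum_mul,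
        h2n]
    have hsum2 : ∑ p ∈ Finset.range (n + 1),
        (n.choose p : ℝ) * (f - μ[f|MeasurableSpace.invariants ⇑Q]) ((⇑Q)^[p] y)
        = (∑ p ∈ Finset.range (n + 1), (n.choose p : ℝ) * f ((⇑Q)^[p] y))
          - 2 ^ n * (μ[f|MeasurableSpace.invariants ⇑Q]) y := by
      simp only [Pi.sub_apply, mul_sub, Finset.sum_sub_distrib]
      rw [hgsum]
    show ((2:ℝ) ^ n)⁻¹ * (∑ p ∈ Finset.range (n + 1), (n.choose p : ℝ) * f ((⇑Q)^[p] y))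
        - (μ[f|MeasurableSpace.invariants ⇑Q]) y
      = ((2:ℝ) ^ n)⁻¹ * ∑ p ∈ Finset.range (n + 1),
          (n.choose p : ℝ) * (f - μ[f|MeasurableSpace.invariants ⇑Q]) ((⇑Q)^[p] y)
    rw [hsum2, mul_sub]
    congr 1
    rw [← mul_assoc, inv_mul_cancel₀ (by positivity : ((2:ℝ) ^ n) ≠ 0), one_mul]
  simp only [hkey]
  rw [ENNReal.tendsto_nhds_zero]
  intro ε hε
  have hδ0 : (0:ℝ≥0∞) < ε / 2 / 2 := ENNReal.half_pos (ENNReal.half_pos hε.ne').ne'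
  obtain ⟨v, hv_close, -⟩ :=
    (memLp_one_iff_integrable.mpr hu).exists_simpleFunc_eLpNorm_sub_lt
      (by norm_num : (1:ℝ≥0∞) ≠ ∞) hδ0.ne'
  obtain ⟨C, hC⟩ := v.exists_forall_norm_le
  have hvAESM : AEStronglyMeasurable (⇑v) μ := v.aestronglyMeasurable
  have hv2 : MemLp (⇑v) 2 μ :=
    (memLp_top_of_bound hvAESM C (Eventually.of_forall hC)).mono_exponent le_top
  have hvint : Integrable (⇑v) μ := hv2.integrable one_le_two
  have hgvb : ∀ᵐ x ∂μ, |(μ[⇑v|MeasurableSpace.invariants ⇑Q]) x| ≤ (C.toNNReal : ℝ) :=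
    ae_bdd_condExp_of_ae_bdd (Eventually.of_forall fun x =>
      le_trans (by simpa [Real.norm_eq_abs] using hC x) (Real.le_coe_toNNReal C))
  have hgvAESM : AEStronglyMeasurable (μ[⇑v|MeasurableSpace.invariants ⇑Q]) μ :=
    (stronglyMeasurable_condExp.mono hm).aestronglyMeasurable
  have hgv2 : MemLp (μ[⇑v|MeasurableSpace.invariants ⇑Q]) 2 μ :=
    (memLp_top_of_bound hgvAESM _ hgvb).mono_exponent le_top
  have hw2 : MemLp (⇑v - μ[⇑v|MeasurableSpace.invariants ⇑Q]) 2 μ := hv2.sub hgv2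
  have hwint : Integrable (⇑v - μ[⇑v|MeasurableSpace.invariants ⇑Q]) μ :=
    hvint.sub integrable_condExp
  have hcondw : μ[⇑v - μ[⇑v|MeasurableSpace.invariants ⇑Q]|MeasurableSpace.invariants ⇑Q]
      =ᵐ[μ] 0 := by
    refine (condExp_sub hvint integrable_condExp _).trans ?_
    rw [condExp_of_stronglyMeasurable hm stronglyMeasurable_condExp integrable_condExp]
    exact Filter.EventuallyEq.of_eq (sub_self _)
  -- bound on eLpNorm of condExp of v
  have hgv_eq : (μ[⇑v|MeasurableSpace.invariants ⇑Q])
      =ᵐ[μ] μ[⇑v - (f - μ[f|MeasurableSpace.invariants ⇑Q])|MeasurableSpace.invariants ⇑Q] := by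
    have h1 := condExp_sub (m := MeasurableSpace.invariants ⇑Q) (μ := μ) hvint hu
    refine Filter.EventuallyEq.symm (h1.trans ?_)
    filter_upwards [hcondu] with x hx
    simp only [Pi.sub_apply, hx, Pi.zero_apply, sub_zero]
  have hgv_norm : eLpNorm (μ[⇑v|MeasurableSpace.invariants ⇑Q]) 1 μ ≤ ε / 2 / 2 := by
    calc eLpNorm (μ[⇑v|MeasurableSpace.invariants ⇑Q]) 1 μ
        = eLpNorm (μ[⇑v - (f - μ[f|MeasurableSpace.invariants ⇑Q])|MeasurableSpace.invariants ⇑Q]) 1 μ :=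
          eLpNorm_congr_ae hgv_eq
      _ ≤ eLpNorm (⇑v - (f - μ[f|MeasurableSpace.invariants ⇑Q])) 1 μ :=
          eLpNorm_one_condExp_le_eLpNorm _
      _ = eLpNorm ((f - μ[f|MeasurableSpace.invariants ⇑Q]) - ⇑v) 1 μ := by
          rw [eLpNorm_sub_comm]
      _ ≤ ε / 2 / 2 := hv_close.le
  have huw_norm : eLpNorm ((f - μ[f|MeasurableSpace.invariants ⇑Q])
      - (⇑v - μ[⇑v|MeasurableSpace.invariants ⇑Q])) 1 μ ≤ ε / 2 / 2 + ε / 2 / 2 := by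
    have hsplit : (f - μ[f|MeasurableSpace.invariants ⇑Q])
        - (⇑v - μ[⇑v|MeasurableSpace.invariants ⇑Q])
        = ((f - μ[f|MeasurableSpace.invariants ⇑Q]) - ⇑v)
          + μ[⇑v|MeasurableSpace.invariants ⇑Q] := by
      abel
    rw [hsplit]
    calc eLpNorm (((f - μ[f|MeasurableSpace.invariants ⇑Q]) - ⇑v)
          + μ[⇑v|MeasurableSpace.invariants ⇑Q]) 1 μ
        ≤ eLpNorm ((f - μ[f|MeasurableSpace.invariants ⇑Q]) - ⇑v) 1 μ
          + eLpNorm (μ[⇑v|MeasurableSpace.invariants ⇑Q]) 1 μ :=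
          eLpNorm_add_le (hu.sub hvint).aestronglyMeasurable hgvAESM le_rfl
      _ ≤ ε / 2 / 2 + ε / 2 / 2 := add_le_add hv_close.le hgv_norm
  have hl2 := l2core Q hQ hw2 hcondw
  have hev2 : ∀ᶠ n in atTop,
      eLpNorm (bavg ⇑Q (⇑v - μ[⇑v|MeasurableSpace.invariants ⇑Q]) n) 2 μ ≤ ε / 2 :=
    (ENNReal.tendsto_nhds_zero.mp hl2) (ε / 2) (ENNReal.half_pos hε.ne')
  filter_upwards [hev2] with n hn
  have hdecomp : bavg ⇑Q (f - μ[f|MeasurableSpace.invariants ⇑Q]) n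
      = fun y => bavg ⇑Q ((f - μ[f|MeasurableSpace.invariants ⇑Q])
          - (⇑v - μ[⇑v|MeasurableSpace.invariants ⇑Q])) n y
        + bavg ⇑Q (⇑v - μ[⇑v|MeasurableSpace.invariants ⇑Q]) n y := by
    funext y
    simp only [bavg]
    rw [← mul_add, ← Finset.sum_add_distrib]
    congr 1
    refine Finset.sum_congr rfl fun p _ => ?_
    simp only [Pi.sub_apply]
    ring
  have huwint : Integrable ((f - μ[f|MeasurableSpace.invariants ⇑Q])
      - (⇑v - μ[⇑v|MeasurableSpace.invariants ⇑Q])) μ := hu.sub hwint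
  calc eLpNorm (bavg ⇑Q (f - μ[f|MeasurableSpace.invariants ⇑Q]) n) 1 μ
      ≤ eLpNorm (bavg ⇑Q ((f - μ[f|MeasurableSpace.invariants ⇑Q])
            - (⇑v - μ[⇑v|MeasurableSpace.invariants ⇑Q])) n) 1 μ
        + eLpNorm (bavg ⇑Q (⇑v - μ[⇑v|MeasurableSpace.invariants ⇑Q]) n) 1 μ := by
        rw [hdecomp]
        exact eLpNorm_add_le (integrable_bavg hQ huwint n).aestronglyMeasurable
          (integrable_bavg hQ hwint n).aestronglyMeasurable le_rfl
    _ ≤ (ε / 2 / 2 + ε / 2 / 2)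
        + eLpNorm (bavg ⇑Q (⇑v - μ[⇑v|MeasurableSpace.invariants ⇑Q]) n) 2 μ :=
        add_le_add ((eLpNorm_bavg_le hQ huwint.aestronglyMeasurable n).trans huw_norm)
          (eLpNorm_le_eLpNorm_of_exponent_le one_le_two
            (integrable_bavg hQ hwint n).aestronglyMeasurable)
    _ ≤ ε / 2 + ε / 2 := add_le_add (le_of_eq (ENNReal.add_halves _)) hn
    _ = ε := ENNReal.add_halves ε

end Measure

end BinKer

open BinKer

/-- Let `S` and `T` be commuting invertible measure-preserving transformations of a probability
space `(X, μ)`, and `P(x, ·) := ½(δ_{Sx} + δ_{Tx})`, so that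
`Pⁿf = 2⁻ⁿ Σ_{p+q=n} C(n,p) S^p T^q f` (Koopman action).  Then for every `f ∈ L¹(μ)`,
`‖Pⁿf − E(f | Λ) ∘ Tⁿ‖₁ → 0` as `n → ∞`, where `Λ` is the σ-algebra of `S⁻¹T`-invariant sets. -/
theorem binomial_kernel_powers_tendsto_condexp
    {X : Type*} [MeasurableSpace X] (μ : Measure X) [IsProbabilityMeasure μ]
    (S T : X ≃ᵐ X) (hS : MeasurePreserving S μ μ) (hT : MeasurePreserving T μ μ)
    (hcomm : ∀ x, S (T x) = T (S x))
    (f : X → ℝ) (hf : Integrable f μ) :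
    Tendsto (fun n : ℕ =>
        eLpNorm (fun x =>
            ((2 : ℝ) ^ n)⁻¹ *
              ∑ p ∈ Finset.range (n + 1), (n.choose p : ℝ) * f ((⇑S)^[p] ((⇑T)^[n - p] x)) -
            (μ[f | MeasurableSpace.invariants (fun x => S.symm (T x))]) ((⇑T)^[n] x))
          1 μ)
      atTop (nhds 0) := by
  set Q : X ≃ᵐ X := T.trans S.symm with hQdef
  have hQcoe : ⇑Q = fun x => S.symm (T x) := by
    rw [hQdef, MeasurableEquiv.coe_trans]
    rfl
  have hQmp : MeasurePreserving ⇑Q μ μ := by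
    rw [hQcoe]
    exact (hS.symm S).comp hT
  have hQd : MeasurePreserving ⇑Q.symm μ μ := hQmp.symm Q
  -- coe of Q.symm
  have hQdcoe : ∀ x, Q.symm x = T.symm (S x) := by
    intro x
    apply Q.injective
    rw [Q.apply_symm_apply]
    symm
    show (fun y => S.symm (T y)) (T.symm (S x)) = x
    simp only []
    rw [show T (T.symm (S x)) = S x from T.apply_symm_apply _, S.symm_apply_apply]
  -- sigma-algebra identification
  have hσ : MeasurableSpace.invariants (fun x => S.symm (T x))
      = MeasurableSpace.invariants ⇑Q.symm := by
    rw [← hQcoe, invariants_symm]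
  -- commutation lemmas
  have hSTsymm : ∀ x, S (T.symm x) = T.symm (S x) := by
    intro x
    have h := hcomm (T.symm x)
    rw [T.apply_symm_apply] at h
    calc S (T.symm x) = T.symm (T (S (T.symm x))) := (T.symm_apply_apply _).symm
      _ = T.symm (S x) := by rw [← h]
  have hSiterT : ∀ (m : ℕ) (x : X), (⇑S)^[m] (T x) = T ((⇑S)^[m] x) := by
    intro m
    induction m with
    | zero => intro x; simp
    | succ m ih =>
      intro x
      rw [Function.iterate_succ_apply, Function.iterate_succ_apply, hcomm, ih]
  have hQdpow : ∀ (p n : ℕ) (x : X), p ≤ n →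
      (⇑Q.symm)^[p] ((⇑T)^[n] x) = (⇑S)^[p] ((⇑T)^[n - p] x) := by
    intro p
    induction p with
    | zero => intro n x _; simp
    | succ p ih =>
      intro n x hpn
      rw [Function.iterate_succ_apply', ih n x (by omega)]
      have hsub : n - p = (n - (p + 1)) + 1 := by omega
      rw [hsub, Function.iterate_succ_apply']
      rw [hSiterT]
      rw [hQdcoe]
      rw [hcomm, show T.symm (T (S ((⇑S)^[p] ((⇑T)^[n - (p+1)] x)))) = _ from
        T.symm_apply_apply _]
      rw [← Function.iterate_succ_apply' (⇑S)]
  -- rewrite the sigma-algebra in the goal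
  simp only [hσ]
  -- identify terms with composed functions
  have hH : ∀ n : ℕ, Integrable
      (fun y => bavg (⇑Q.symm) f n y - (μ[f|MeasurableSpace.invariants ⇑Q.symm]) y) μ :=
    fun n => (integrable_bavg hQd hf n).sub integrable_condExp
  refine (core Q.symm hQd hf).congr fun n => ?_
  have hcompeq : (fun x =>
      ((2 : ℝ) ^ n)⁻¹ *
        ∑ p ∈ Finset.range (n + 1), (n.choose p : ℝ) * f ((⇑S)^[p] ((⇑T)^[n - p] x)) -
      (μ[f | MeasurableSpace.invariants ⇑Q.symm]) ((⇑T)^[n] x))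
      = (fun y => bavg (⇑Q.symm) f n y
          - (μ[f|MeasurableSpace.invariants ⇑Q.symm]) y) ∘ (⇑T)^[n] := by
    funext x
    show _ = bavg (⇑Q.symm) f n ((⇑T)^[n] x) - _
    simp only [bavg]
    congr 2
    refine Finset.sum_congr rfl fun p hp => ?_
    rw [Finset.mem_range] at hp
    rw [hQdpow p n x (by omega)]
  rw [hcompeq]
  exact (eLpNorm_comp_measurePreserving (hH n).aestronglyMeasurable (hT.iterate n)).symm
end

section
/- In the product system example: let X := (ℤ/2)^ℤ × (ℤ/2)^ℤ with μ the product of Haar measures, ν := (½δ_{(0,0)} + ½δ_{(1,1)})^{⊗ℤ} on X, and P(x, ·) := δ_{(S×S)x} ∗ ν. Then the group homomorphism φ : X → (ℤ/2)^ℤ, φ(x₁, x₂) := x₁ − x₂, is a factor map from the kernel P to the deterministic left shift S: that is, φ_*μ is Haar measure, and for μ-a.e. x, the pushforward of P(x, ·) under φ equals δ_{S(φ(x))}. -/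
open MeasureTheory

private lemma cyl_measurable {s t : Finset ℤ} {B : ℤ → Finset (ZMod 2 × ZMod 2)}
    {a : ℤ → ZMod 2 × ZMod 2} :
    MeasurableSet {x : ℤ → ZMod 2 × ZMod 2 | (∀ k ∈ s, x k ∈ B k) ∧ ∀ k ∈ t, x k = a k} := by
  have : {x : ℤ → ZMod 2 × ZMod 2 | (∀ k ∈ s, x k ∈ B k) ∧ ∀ k ∈ t, x k = a k}
      = (⋂ k ∈ s, (fun x : ℤ → ZMod 2 × ZMod 2 => x k) ⁻¹' (B k : Set (ZMod 2 × ZMod 2)))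
        ∩ (⋂ k ∈ t, (fun x : ℤ → ZMod 2 × ZMod 2 => x k) ⁻¹' {a k}) := by
    ext x; simp [Set.mem_iInter]
  rw [this]
  exact ((MeasurableSet.biInter (Set.to_countable _) fun k _ =>
      (measurable_pi_apply k) (Set.toFinite _).measurableSet).inter
    (MeasurableSet.biInter (Set.to_countable _) fun k _ =>
      (measurable_pi_apply k) (measurableSet_singleton _)))

private lemma mu_box (μ : Measure (ℤ → ZMod 2 × ZMod 2))
    (hμ : ∀ (s : Finset ℤ) (a : ℤ → ZMod 2 × ZMod 2),
      μ {x | ∀ k ∈ s, x k = a k} = (4 : ENNReal)⁻¹ ^ s.card)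
    (s : Finset ℤ) :
    ∀ (t : Finset ℤ) (B : ℤ → Finset (ZMod 2 × ZMod 2)) (a : ℤ → ZMod 2 × ZMod 2),
      Disjoint s t →
      μ {x | (∀ k ∈ s, x k ∈ B k) ∧ ∀ k ∈ t, x k = a k}
        = (∏ k ∈ s, ((B k).card : ENNReal)) * (4 : ENNReal)⁻¹ ^ (s.card + t.card) := by
  induction s using Finset.induction_on with
  | empty =>
    intro t B a _
    have : {x : ℤ → ZMod 2 × ZMod 2 | (∀ k ∈ (∅ : Finset ℤ), x k ∈ B k) ∧ ∀ k ∈ t, x k = a k}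
        = {x | ∀ k ∈ t, x k = a k} := by ext x; simp
    rw [this, hμ]; simp
  | insert j s hj ih =>
    intro t B a hdisj
    have hjt : j ∉ t := by
      intro hjt
      exact (Finset.disjoint_left.1 hdisj (Finset.mem_insert_self j s)) hjt
    have hst : Disjoint s (insert j t) := by
      rw [Finset.disjoint_insert_right]
      exact ⟨hj, (Finset.disjoint_insert_left.1 hdisj).2⟩
    have hset : {x : ℤ → ZMod 2 × ZMod 2 | (∀ k ∈ insert j s, x k ∈ B k) ∧ ∀ k ∈ t, x k = a k}
        = ⋃ v ∈ B j, {x | (∀ k ∈ s, x k ∈ B k) ∧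
            ∀ k ∈ insert j t, x k = Function.update a j v k} := by
      ext x
      simp only [Set.mem_setOf_eq, Set.mem_iUnion, Finset.mem_insert]
      constructor
      · rintro ⟨h1, h2⟩
        refine ⟨x j, h1 j (Or.inl rfl), fun k hk => h1 k (Or.inr hk), ?_⟩
        rintro k (rfl | hk)
        · simp [Function.update_self]
        · rw [Function.update_of_ne (fun hkj => hjt (by rw [← hkj]; exact hk))]
          exact h2 k hk
      · rintro ⟨v, hv, h1, h2⟩
        have hxj : x j = v := by simpa using h2 j (Or.inl rfl)
        refine ⟨?_, fun k hk => ?_⟩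
        · rintro k (rfl | hk)
          · rwa [hxj]
          · exact h1 k hk
        · have := h2 k (Or.inr hk)
          rwa [Function.update_of_ne (fun hkj => hjt (by rw [← hkj]; exact hk))] at this
    rw [hset, measure_biUnion_finset ?_ (fun v _ => cyl_measurable)]
    · have : ∀ v ∈ B j, μ {x : ℤ → ZMod 2 × ZMod 2 | (∀ k ∈ s, x k ∈ B k) ∧
          ∀ k ∈ insert j t, x k = Function.update a j v k}
          = (∏ k ∈ s, ((B k).card : ENNReal)) * (4 : ENNReal)⁻¹ ^ (s.card + (insert j t).card) :=
        fun v _ => ih (insert j t) B (Function.update a j v) hst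
      rw [Finset.sum_congr rfl this, Finset.sum_const, Finset.card_insert_of_notMem hjt,
        Finset.card_insert_of_notMem hj, Finset.prod_insert hj, nsmul_eq_mul]
      ring_nf
    · intro v hv w hw hvw
      refine Set.disjoint_left.2 fun x hx hx' => hvw ?_
      have h1 : x j = v := by simpa using hx.2 j (Finset.mem_insert_self j t)
      have h2 : x j = w := by simpa using hx'.2 j (Finset.mem_insert_self j t)
      rw [← h1, ← h2]

private lemma mu_diff_cyl (μ : Measure (ℤ → ZMod 2 × ZMod 2))
    (hμ : ∀ (s : Finset ℤ) (a : ℤ → ZMod 2 × ZMod 2),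
      μ {x | ∀ k ∈ s, x k = a k} = (4 : ENNReal)⁻¹ ^ s.card)
    (s : Finset ℤ) (c : ℤ → ZMod 2) :
    μ {x | ∀ k ∈ s, (x k).1 - (x k).2 = c k} = (2 : ENNReal)⁻¹ ^ s.card := by
  have fiber_card : ∀ c : ZMod 2,
      (Finset.univ.filter (fun p : ZMod 2 × ZMod 2 => p.1 - p.2 = c)).card = 2 := by decide
  have two_inv_pow : ∀ n : ℕ,
      (2 : ENNReal) ^ n * (4 : ENNReal)⁻¹ ^ n = (2 : ENNReal)⁻¹ ^ n := by
    intro n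
    rw [← mul_pow]
    congr 1
    have h4 : (4 : ENNReal) = 2 * 2 := by norm_num
    rw [h4, ENNReal.mul_inv (by norm_num) (by norm_num), ← mul_assoc,
      ENNReal.mul_inv_cancel (by norm_num) (by norm_num), one_mul]
  have hset : {x : ℤ → ZMod 2 × ZMod 2 | ∀ k ∈ s, (x k).1 - (x k).2 = c k}
      = {x | (∀ k ∈ s, x k ∈ Finset.univ.filter (fun p : ZMod 2 × ZMod 2 => p.1 - p.2 = c k))
          ∧ ∀ k ∈ (∅ : Finset ℤ), x k = 0} := by
    ext x; simp
  rw [hset, mu_box μ hμ s ∅ _ _ (Finset.disjoint_empty_right s)]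
  simp_rw [fiber_card]
  simp only [Finset.prod_const, Nat.cast_ofNat, Finset.card_empty, Nat.add_zero]
  exact two_inv_pow s.card

/-- In the product system example, with `X := (ℤ/2)^ℤ × (ℤ/2)^ℤ ≅ (ℤ/2 × ℤ/2)^ℤ`, `μ` the
product of Haar measures, `ν := (½δ_{(0,0)} + ½δ_{(1,1)})^{⊗ℤ}` (both characterized by their
cylinder probabilities), and `P(x, ·) := δ_{(S×S)x} ∗ ν`: the group homomorphism
`φ(x₁, x₂) := x₁ − x₂` pushes `μ` to Haar measure on `(ℤ/2)^ℤ`, and for `μ`-a.e. `x` the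
pushforward of `P(x, ·)` under `φ` is `δ_{S(φ(x))}`; i.e. `φ` is a factor map from the kernel
`P` to the deterministic left shift `S`. -/
theorem difference_factor_map_to_shift
    (μ ν : Measure (ℤ → ZMod 2 × ZMod 2)) [IsProbabilityMeasure μ] [IsProbabilityMeasure ν]
    (h : Measure (ℤ → ZMod 2)) [IsProbabilityMeasure h]
    (hμ : ∀ (s : Finset ℤ) (a : ℤ → ZMod 2 × ZMod 2),
      μ {x | ∀ k ∈ s, x k = a k} = (4 : ENNReal)⁻¹ ^ s.card)
    (hν : ∀ (s : Finset ℤ) (a : ℤ → ZMod 2 × ZMod 2),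
      ν {x | ∀ k ∈ s, x k = a k} =
        ∏ k ∈ s, (if a k = ((0 : ZMod 2), (0 : ZMod 2)) ∨ a k = (1, 1)
          then (2 : ENNReal)⁻¹ else 0))
    (hh : ∀ (s : Finset ℤ) (a : ℤ → ZMod 2),
      h {x | ∀ k ∈ s, x k = a k} = (2 : ENNReal)⁻¹ ^ s.card) :
    Measure.map (fun x : ℤ → ZMod 2 × ZMod 2 => fun k => (x k).1 - (x k).2) μ = h ∧
    ∀ᵐ x ∂μ,
      Measure.map (fun x : ℤ → ZMod 2 × ZMod 2 => fun k => (x k).1 - (x k).2)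
          (Measure.map (fun y => (fun k => x (k + 1)) + y) ν) =
        Measure.dirac (fun k => (x (k + 1)).1 - (x (k + 1)).2) := by
  set φ : (ℤ → ZMod 2 × ZMod 2) → (ℤ → ZMod 2) := fun x => fun k => (x k).1 - (x k).2 with hφdef
  have hφ : Measurable φ := measurable_pi_lambda _ fun k =>
    (measurable_of_countable (fun p : ZMod 2 × ZMod 2 => p.1 - p.2)).comp (measurable_pi_apply k)
  constructor
  · -- Part 1: pushforward of μ is Haar measure h
    haveI : IsProbabilityMeasure (Measure.map φ μ) := Measure.isProbabilityMeasure_map hφ.aemeasurable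
    refine ext_of_generate_finite _ generateFrom_measurableCylinders.symm
      isPiSystem_measurableCylinders ?_ (by simp)
    rintro S hS
    obtain ⟨s, T, hT, rfl⟩ := (mem_measurableCylinders S).1 hS
    have hdecomp : cylinder s T = ⋃ g ∈ (Set.toFinite T).toFinset,
        cylinder (α := fun _ : ℤ => ZMod 2) s {g} := by
      ext x; simp [mem_cylinder]
    have hmeas : ∀ g : ∀ i : s, ZMod 2,
        MeasurableSet (cylinder (α := fun _ : ℤ => ZMod 2) s ({g} : Set (∀ i : s, ZMod 2))) :=
      fun g => (measurableSet_singleton g).cylinder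
    have hdisj : ∀ g ∈ (Set.toFinite T).toFinset, ∀ g' ∈ (Set.toFinite T).toFinset, g ≠ g' →
        Disjoint (cylinder (α := fun _ : ℤ => ZMod 2) s ({g} : Set (∀ i : s, ZMod 2)))
          (cylinder (α := fun _ : ℤ => ZMod 2) s {g'}) := by
      intro g _ g' _ hgg'
      refine Set.disjoint_left.2 fun x hx hx' => hgg' ?_
      simp only [mem_cylinder, Set.mem_singleton_iff] at hx hx'
      rw [← hx, ← hx']
    have key : ∀ g : ∀ i : s, ZMod 2,
        Measure.map φ μ (cylinder (α := fun _ : ℤ => ZMod 2) s ({g} : Set (∀ i : s, ZMod 2)))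
          = h (cylinder (α := fun _ : ℤ => ZMod 2) s ({g} : Set (∀ i : s, ZMod 2))) := by
      intro g
      set a : ℤ → ZMod 2 := fun k => if hk : k ∈ s then g ⟨k, hk⟩ else 0 with ha
      have hcyl : cylinder (α := fun _ : ℤ => ZMod 2) s ({g} : Set (∀ i : s, ZMod 2))
          = {x | ∀ k ∈ s, x k = a k} := by
        ext x
        simp only [mem_cylinder, Set.mem_singleton_iff, funext_iff, Set.mem_setOf_eq]
        constructor
        · intro hx k hk
          simp only [ha, dif_pos hk]
          exact hx ⟨k, hk⟩
        · intro hx i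
          have := hx i.1 i.2
          simpa [ha, dif_pos i.2] using this
      rw [hcyl, hh s a, Measure.map_apply hφ]
      · have : φ ⁻¹' {x | ∀ k ∈ s, x k = a k} = {x | ∀ k ∈ s, (x k).1 - (x k).2 = a k} := rfl
        rw [this, mu_diff_cyl μ hμ s a]
      · have : {x : ℤ → ZMod 2 | ∀ k ∈ s, x k = a k}
            = ⋂ k ∈ s, (fun x : ℤ → ZMod 2 => x k) ⁻¹' {a k} := by ext x; simp
        rw [this]
        exact MeasurableSet.biInter (Set.to_countable _) fun k _ =>
          (measurable_pi_apply k) (measurableSet_singleton _)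
    rw [hdecomp, measure_biUnion_finset hdisj (fun g _ => hmeas g),
      measure_biUnion_finset hdisj (fun g _ => hmeas g)]
    exact Finset.sum_congr rfl fun g _ => key g
  · -- Part 2: the kernel pushes to the deterministic shift
    have hsingle : ∀ (k : ℤ) (a : ZMod 2 × ZMod 2), ¬(a = (0, 0) ∨ a = (1, 1)) →
        ν {y | y k = a} = 0 := by
      intro k a ha
      have : {y : ℤ → ZMod 2 × ZMod 2 | y k = a}
          = {y | ∀ j ∈ ({k} : Finset ℤ), y j = (fun _ => a) j} := by ext y; simp
      rw [this, hν, Finset.prod_singleton, if_neg ha]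
    have key : ∀ k : ℤ, ν {y : ℤ → ZMod 2 × ZMod 2 | (y k).1 ≠ (y k).2} = 0 := by
      intro k
      refine measure_mono_null (fun y hy => ?_)
        (measure_union_null (hsingle k (0, 1) (by decide)) (hsingle k (1, 0) (by decide)))
      have : y k = ((0 : ZMod 2), (1 : ZMod 2)) ∨ y k = (1, 0) := by
        revert hy
        have : ∀ p : ZMod 2 × ZMod 2, p.1 ≠ p.2 → p = (0, 1) ∨ p = (1, 0) := by decide
        exact this (y k)
      exact this.imp (fun h => h) (fun h => h)
    have h0 : ν (⋃ k : ℤ, {y : ℤ → ZMod 2 × ZMod 2 | (y k).1 ≠ (y k).2}) = 0 :=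
      measure_iUnion_null key
    refine Filter.Eventually.of_forall fun x => ?_
    set c : ℤ → ZMod 2 := fun k => (x (k + 1)).1 - (x (k + 1)).2 with hc
    set g : (ℤ → ZMod 2 × ZMod 2) → (ℤ → ZMod 2 × ZMod 2) := fun y => (fun k => x (k + 1)) + y
      with hg
    have hgm : Measurable g := by
      apply measurable_pi_lambda
      intro k
      exact (measurable_of_countable (fun v : ZMod 2 × ZMod 2 => x (k + 1) + v)).comp
        (measurable_pi_apply k)
    have hae : (fun y => φ (g y)) =ᵐ[ν] fun _ => c := by
      refine measure_mono_null (fun y hy => ?_) h0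
      simp only [Set.mem_setOf_eq, Set.mem_iUnion] at hy ⊢
      by_contra hall
      push_neg at hall
      apply hy
      funext k
      have hk := hall k
      show ((g y) k).1 - ((g y) k).2 = c k
      have : (g y) k = x (k + 1) + y k := rfl
      rw [this]
      have hy2 : (y k).2 = (y k).1 := hk.symm
      simp only [Prod.fst_add, Prod.snd_add, hc, hy2]
      ring
    calc Measure.map φ (Measure.map g ν) = Measure.map (φ ∘ g) ν := Measure.map_map hφ hgm
      _ = Measure.map (fun _ => c) ν := Measure.map_congr hae
      _ = Measure.dirac c := by simp [Measure.map_const]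
end

section
/- (Deterministic σ-algebra is a factor) Let (X, μ, P) be a random p.-p. system and define Ψ_∞ := ⋂_{m≥1} {A ∈ Σ_X : P^{(m)}(x, A) ∈ {0,1} for μ-a.e. x}, where P^{(m)} is the m-step kernel. Then Ψ_∞ is a σ-algebra, and the map A ↦ {x : P(x, A) = 1} maps Ψ_∞ into Ψ_∞ (modulo μ-null sets) and preserves μ: μ({x : P(x,A) = 1}) = μ(A) for A ∈ Ψ_∞. -/
open MeasureTheory ProbabilityTheory

/-- The `m`-step kernel `P^{(m)}`, the `m`-fold composition of `P`. -/
noncomputable def kernelPow {X : Type*} [MeasurableSpace X]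
    (P : ProbabilityTheory.Kernel X X) : ℕ → ProbabilityTheory.Kernel X X
  | 0 => ProbabilityTheory.Kernel.id
  | m + 1 => P.comp (kernelPow P m)

/-- The deterministic σ-algebra of a random p.-p. system `(X, μ, P)`:
`Ψ_∞ = ⋂_{m≥1} {A : P^{(m)}(x, A) ∈ {0,1} for μ-a.e. x}`. -/
def detSets {X : Type*} [MeasurableSpace X] (μ : Measure X)
    (P : ProbabilityTheory.Kernel X X) : Set (Set X) :=
  {A | MeasurableSet A ∧ ∀ m : ℕ, 1 ≤ m →
    ∀ᵐ x ∂μ, kernelPow P m x A = 0 ∨ kernelPow P m x A = 1}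

section aux

variable {X : Type*} [MeasurableSpace X]

lemma kernelPow_zero (P : Kernel X X) : kernelPow P 0 = Kernel.id := rfl
lemma kernelPow_succ (P : Kernel X X) (m : ℕ) :
    kernelPow P (m + 1) = P.comp (kernelPow P m) := rfl

instance kernelPow.instIsMarkovKernel (P : Kernel X X) [IsMarkovKernel P] (m : ℕ) :
    IsMarkovKernel (kernelPow P m) := by
  induction m with
  | zero => rw [kernelPow_zero]; infer_instance
  | succ m ih => rw [kernelPow_succ]; infer_instance

lemma bind_kernelPow (μ : Measure X) (P : Kernel X X) (hP : μ.bind P = μ) (m : ℕ) :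
    μ.bind (kernelPow P m) = μ := by
  induction m with
  | zero =>
      rw [kernelPow_zero,
        show ⇑(Kernel.id : Kernel X X) = Measure.dirac from funext Kernel.id_apply,
        Measure.bind_dirac]
  | succ m ih =>
      rw [kernelPow_succ,
        show ⇑(P.comp (kernelPow P m)) = fun a => ((kernelPow P m) a).bind P from
          funext fun a => Kernel.comp_apply P (kernelPow P m) a,
        ← Measure.bind_bind (kernelPow P m).measurable.aemeasurable P.measurable.aemeasurable, ih, hP]

lemma kernelPow_null (μ : Measure X) (P : Kernel X X) (hP : μ.bind P = μ) (m : ℕ)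
    {N : Set X} (hNm : MeasurableSet N) (hN : μ N = 0) :
    ∀ᵐ x ∂μ, kernelPow P m x N = 0 := by
  have h : ∫⁻ x, kernelPow P m x N ∂μ = 0 := by
    rw [← Measure.bind_apply hNm (kernelPow P m).measurable.aemeasurable, bind_kernelPow μ P hP m, hN]
  exact (lintegral_eq_zero_iff ((kernelPow P m).measurable_coe hNm)).mp h

end aux

/-- The deterministic σ-algebra `Ψ_∞` of a random p.-p. system is a σ-algebra, and the map
`A ↦ {x : P(x, A) = 1}` maps `Ψ_∞` into `Ψ_∞` and preserves `μ`:
`μ({x : P(x,A) = 1}) = μ(A)` for `A ∈ Ψ_∞`. -/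
theorem deterministic_sigma_algebra_factor
    {X : Type*} [MeasurableSpace X] (μ : Measure X) [IsProbabilityMeasure μ]
    (P : Kernel X X) [IsMarkovKernel P] (hP : μ.bind P = μ) :
    (Set.univ ∈ detSets μ P) ∧
    (∀ A ∈ detSets μ P, Aᶜ ∈ detSets μ P) ∧
    (∀ A : ℕ → Set X, (∀ i, A i ∈ detSets μ P) → (⋃ i, A i) ∈ detSets μ P) ∧
    (∀ A ∈ detSets μ P, {x | P x A = 1} ∈ detSets μ P) ∧
    (∀ A ∈ detSets μ P, μ {x | P x A = 1} = μ A) := by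
  -- P x A = 1 iff membership in B; first, the a.e. indicator identity at level 1.
  have hone : ∀ A : Set X, MeasurableSet A → kernelPow P 1 = P := by
    intro A hA
    rw [kernelPow_succ, kernelPow_zero, Kernel.comp_id]
  refine ⟨?_, ?_, ?_, ?_, ?_⟩
  · -- univ
    refine ⟨MeasurableSet.univ, fun m hm => Filter.Eventually.of_forall fun x => Or.inr ?_⟩
    simp
  · -- complement
    rintro A ⟨hAm, hA⟩
    refine ⟨hAm.compl, fun m hm => (hA m hm).mono fun x hx => ?_⟩
    have hc : kernelPow P m x Aᶜ = 1 - kernelPow P m x A :=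
      prob_compl_eq_one_sub hAm
    rcases hx with h | h <;> rw [hc, h] <;> simp
  · -- countable union
    intro A hA
    refine ⟨MeasurableSet.iUnion fun i => (hA i).1, fun m hm => ?_⟩
    have := fun i => (hA i).2 m hm
    rw [← ae_all_iff] at this
    refine this.mono fun x hx => ?_
    by_cases h : ∃ i, kernelPow P m x (A i) = 1
    · obtain ⟨i, hi⟩ := h
      refine Or.inr (le_antisymm prob_le_one ?_)
      calc (1 : ENNReal) = kernelPow P m x (A i) := hi.symm
        _ ≤ kernelPow P m x (⋃ i, A i) := measure_mono (Set.subset_iUnion A i)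
    · push_neg at h
      refine Or.inl (le_antisymm ?_ zero_le)
      calc kernelPow P m x (⋃ i, A i) ≤ ∑' i, kernelPow P m x (A i) := measure_iUnion_le A
        _ = 0 := by
            simp only [ENNReal.tsum_eq_zero]
            intro i
            rcases hx i with h0 | h1
            · exact h0
            · exact absurd h1 (h i)
  · -- invariance of detSets under A ↦ {x | P x A = 1}
    rintro A ⟨hAm, hA⟩
    set B : Set X := {x | P x A = 1} with hB
    have hBm : MeasurableSet B := (P.measurable_coe hAm) (measurableSet_singleton 1)
    refine ⟨hBm, fun m hm => ?_⟩
    -- the exceptional set at level 1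
    have h1 : ∀ᵐ y ∂μ, P y A = 0 ∨ P y A = 1 := by
      have := hA 1 le_rfl
      rwa [hone A hAm] at this
    set N : Set X := {y | ¬ (P y A = 0 ∨ P y A = 1)} with hNdef
    have hNm : MeasurableSet N := by
      have h0 : MeasurableSet {y | P y A = 0} :=
        (P.measurable_coe hAm) (measurableSet_singleton 0)
      have h1' : MeasurableSet {y | P y A = 1} :=
        (P.measurable_coe hAm) (measurableSet_singleton 1)
      have : N = ({y | P y A = 0} ∪ {y | P y A = 1})ᶜ := by
        ext y; simp [hNdef]
      rw [this]
      exact (h0.union h1').compl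
    have hN : μ N = 0 := h1
    have hnull := kernelPow_null μ P hP m hNm hN
    have hAm1 := hA (m + 1) (by omega)
    filter_upwards [hnull, hAm1] with x hxN hxA
    -- compute P^{m+1} x A = P^m x B
    have key : kernelPow P (m + 1) x A = kernelPow P m x B := by
      rw [kernelPow_succ, Kernel.comp_apply' _ _ _ hAm]
      have : ∀ᵐ y ∂(kernelPow P m x), P y A = B.indicator 1 y := by
        have : ∀ᵐ y ∂(kernelPow P m x), y ∉ N :=
          (measure_eq_zero_iff_ae_notMem.mp hxN)
        refine this.mono fun y hy => ?_
        have hy' : P y A = 0 ∨ P y A = 1 := not_not.mp hy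
        rcases hy' with h0 | h1
        · have : y ∉ B := by simp [hB, h0]
          simp [Set.indicator_of_notMem this, h0]
        · have : y ∈ B := h1
          simp [Set.indicator_of_mem this, h1]
      rw [lintegral_congr_ae this, lintegral_indicator_one hBm]
    rw [← key]
    exact hxA
  · -- measure preservation
    rintro A ⟨hAm, hA⟩
    set B : Set X := {x | P x A = 1} with hB
    have hBm : MeasurableSet B := (P.measurable_coe hAm) (measurableSet_singleton 1)
    have h1 : ∀ᵐ y ∂μ, P y A = 0 ∨ P y A = 1 := by
      have := hA 1 le_rfl
      rwa [hone A hAm] at this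
    have : μ A = ∫⁻ x, P x A ∂μ := by
      rw [← Measure.bind_apply hAm P.measurable.aemeasurable, hP]
    rw [this]
    have hind : ∀ᵐ x ∂μ, P x A = B.indicator 1 x := by
      refine h1.mono fun x hx => ?_
      rcases hx with h0 | h1'
      · have : x ∉ B := by simp [hB, h0]
        simp [Set.indicator_of_notMem this, h0]
      · have : x ∈ B := h1'
        simp [Set.indicator_of_mem this, h1']
    rw [lintegral_congr_ae hind, lintegral_indicator_one hBm]
end
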